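/- If u : ℝ⁴ → ℝ is a C² solution of the ultrahyperbolic equation u_{X₁X₁} + u_{X₂X₂} - u_{X₃X₃} - u_{X₄X₄} = 0, then for all a,b,c,d ∈ ℝ and r > 0, the mean value property ∫₀^{2π} u(a + r cos θ, b + r sin θ, c, d) dθ = ∫₀^{2π} u(a, b, c + r cos θ, d + r sin θ) dθ holds. -/

import Mathlib

open MeasureTheory Set Filter intervalIntegral
open scoped Topology

noncomputable section

set_option maxHeartbeats 1000000

namespace Asg

abbrev E4 : Type := ℝ × ℝ × ℝ × ℝ

/-- The square `[0,2π] × [0,2π]`. -/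
def S2 : Set (ℝ × ℝ) := Icc (0:ℝ) (2*Real.pi) ×ˢ Icc (0:ℝ) (2*Real.pi)

lemma isCompact_S2 : IsCompact S2 := isCompact_Icc.prod isCompact_Icc

lemma contIntegrableOn {S : Set (ℝ×ℝ)} (hS : IsCompact S) {X : Type*} [NormedAddCommGroup X]
    {f : (ℝ×ℝ) → X} (hf : Continuous f) : IntegrableOn f S :=
  hf.continuousOn.integrableOn_compact hS

/-- Continuity of a parametric integral over a compact set. -/
lemma contIntegral {S : Set (ℝ×ℝ)} (hS : IsCompact S)
    {X : Type*} [NormedAddCommGroup X] [NormedSpace ℝ X]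
    {Φ : (ℝ×ℝ) → (ℝ×ℝ) → X} (hΦ : Continuous fun p : (ℝ×ℝ)×(ℝ×ℝ) => Φ p.1 p.2) :
    Continuous fun q => ∫ z in S, Φ q z := by
  rw [continuous_iff_continuousAt]
  intro q₀
  obtain ⟨C, hC⟩ := ((isCompact_closedBall q₀ 1).prod hS).exists_bound_of_continuousOn
    hΦ.continuousOn
  apply continuousAt_of_dominated (bound := fun _ => C)
  · exact Eventually.of_forall fun q =>
      (hΦ.comp (continuous_const.prodMk continuous_id)).aestronglyMeasurable
  · filter_upwards [Metric.closedBall_mem_nhds q₀ one_pos] with q hq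
    exact ae_restrict_of_forall_mem hS.measurableSet fun z hz => hC (q, z) ⟨hq, hz⟩
  · exact integrableOn_const hS.measure_lt_top.ne
  · exact Eventually.of_forall fun z =>
      (hΦ.comp (continuous_id.prodMk continuous_const)).continuousAt

/-- Differentiation under the integral over a compact set. -/
lemma fderivIntegral {S : Set (ℝ×ℝ)} (hS : IsCompact S)
    {Φ : (ℝ×ℝ) → (ℝ×ℝ) → ℝ} {Φ' : (ℝ×ℝ) → (ℝ×ℝ) → (ℝ×ℝ) →L[ℝ] ℝ}
    (hΦ : Continuous fun p : (ℝ×ℝ)×(ℝ×ℝ) => Φ p.1 p.2)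
    (hΦ' : Continuous fun p : (ℝ×ℝ)×(ℝ×ℝ) => Φ' p.1 p.2)
    (hd : ∀ z q, HasFDerivAt (fun w => Φ w z) (Φ' q z) q) (q₀ : ℝ×ℝ) :
    HasFDerivAt (fun q => ∫ z in S, Φ q z) (∫ z in S, Φ' q₀ z) q₀ := by
  obtain ⟨C, hC⟩ := ((isCompact_closedBall q₀ 1).prod hS).exists_bound_of_continuousOn
    hΦ'.continuousOn
  apply _root_.hasFDerivAt_integral_of_dominated_of_fderiv_le (bound := fun _ => C) (Metric.ball_mem_nhds q₀ one_pos)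
  · exact Eventually.of_forall fun q =>
      (hΦ.comp (continuous_const.prodMk continuous_id)).aestronglyMeasurable
  · exact contIntegrableOn hS (hΦ.comp (continuous_const.prodMk continuous_id))
  · exact (hΦ'.comp (continuous_const.prodMk continuous_id)).aestronglyMeasurable
  · exact ae_restrict_of_forall_mem hS.measurableSet fun z hz q hq =>
      hC (q, z) ⟨Metric.ball_subset_closedBall hq, hz⟩
  · exact integrableOn_const hS.measure_lt_top.ne
  · exact ae_restrict_of_forall_mem hS.measurableSet fun z _ q _ => hd z q

section Ucalc

variable (U : E4 → ℝ)

def Up : E4 → E4 →L[ℝ] ℝ := fderiv ℝ U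
def Upp : E4 → E4 →L[ℝ] E4 →L[ℝ] ℝ := fderiv ℝ (Up U)

variable {U}

lemma diffU (hU : ContDiff ℝ 2 U) : ∀ p, HasFDerivAt U (Up U p) p := fun p =>
  ((hU.differentiable (by norm_num)) p).hasFDerivAt

lemma diffUp (hU : ContDiff ℝ 2 U) : ∀ p, HasFDerivAt (Up U) (Upp U p) p := fun p =>
  (((hU.fderiv_right (m := 1) (by norm_num)).differentiable one_ne_zero) p).hasFDerivAt

lemma contUp (hU : ContDiff ℝ 2 U) : Continuous (Up U) :=
  hU.continuous_fderiv (by norm_num)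

lemma contUpp (hU : ContDiff ℝ 2 U) : Continuous (Upp U) :=
  (hU.fderiv_right (m := 1) (by norm_num)).continuous_fderiv one_ne_zero

lemma uppSymm (hU : ContDiff ℝ 2 U) (p : E4) (x y : E4) : Upp U p x y = Upp U p y x :=
  second_derivative_symmetric (diffU hU) (diffUp hU p) x y

end Ucalc

/-! circle maps -/

def circ (v w : E4) (θ : ℝ) : E4 := Real.cos θ • v + Real.sin θ • w
def dcirc (v w : E4) (θ : ℝ) : E4 := (-Real.sin θ) • v + Real.cos θ • w

lemma contCirc (v w : E4) : Continuous (circ v w) :=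
  (Real.continuous_cos.smul continuous_const).add (Real.continuous_sin.smul continuous_const)

lemma hasDerivAt_circ (v w : E4) (θ : ℝ) : HasDerivAt (circ v w) (dcirc v w θ) θ :=
  ((Real.hasDerivAt_cos θ).smul_const v).add ((Real.hasDerivAt_sin θ).smul_const w)

lemma hasDerivAt_dcirc (v w : E4) (θ : ℝ) : HasDerivAt (dcirc v w) (-circ v w θ) θ := by
  have h := (((Real.hasDerivAt_sin θ).neg).smul_const v).add ((Real.hasDerivAt_cos θ).smul_const w)
  refine h.congr_deriv ?_
  simp only [circ, neg_add, neg_smul]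

lemma circ_per (v w : E4) : circ v w (2*Real.pi) = circ v w 0 := by
  simp [circ, Real.cos_two_pi, Real.sin_two_pi]

lemma dcirc_per (v w : E4) : dcirc v w (2*Real.pi) = dcirc v w 0 := by
  simp [dcirc, Real.cos_two_pi, Real.sin_two_pi]

/-- rotation invariance of a bilinear form on an (orthonormal-like) pair -/
lemma rot_identity (B : E4 →L[ℝ] E4 →L[ℝ] ℝ) (v w : E4) (θ : ℝ) :
    B (circ v w θ) (circ v w θ) + B (dcirc v w θ) (dcirc v w θ) = B v v + B w w := by
  have h := Real.sin_sq_add_cos_sq θ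
  simp only [circ, dcirc, neg_smul, map_add, map_neg, _root_.map_smul,
    ContinuousLinearMap.add_apply, ContinuousLinearMap.neg_apply,
    ContinuousLinearMap.smul_apply, smul_eq_mul]
  linear_combination (B v v + B w w) * h


/-! ### Fubini helpers on the square -/

lemma twoPi_nonneg : (0:ℝ) ≤ 2*Real.pi := by positivity

lemma Icc_intervalIntegral {X : Type*} [NormedAddCommGroup X] [NormedSpace ℝ X] (g : ℝ → X) :
    ∫ y in Icc (0:ℝ) (2*Real.pi), g y = ∫ y in (0:ℝ)..(2*Real.pi), g y := by
  rw [intervalIntegral.integral_of_le twoPi_nonneg, integral_Icc_eq_integral_Ioc]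

lemma restrict_S2 : (volume : Measure (ℝ×ℝ)).restrict S2
    = (volume.restrict (Icc (0:ℝ) (2*Real.pi))).prod (volume.restrict (Icc (0:ℝ) (2*Real.pi))) := by
  rw [Measure.prod_restrict, S2, Measure.volume_eq_prod]

lemma integrable_restrict_prod {X : Type*} [NormedAddCommGroup X] {f : ℝ×ℝ → X}
    (hf : Continuous f) :
    Integrable f ((volume.restrict (Icc (0:ℝ) (2*Real.pi))).prod
      (volume.restrict (Icc (0:ℝ) (2*Real.pi)))) := by
  rw [← restrict_S2]
  exact contIntegrableOn isCompact_S2 hf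

lemma setIntegral_S2 {X : Type*} [NormedAddCommGroup X] [NormedSpace ℝ X] {f : ℝ×ℝ → X}
    (hf : Continuous f) :
    ∫ z in S2, f z =
      ∫ x in Icc (0:ℝ) (2*Real.pi), ∫ y in Icc (0:ℝ) (2*Real.pi), f (x, y) := by
  rw [restrict_S2]
  exact MeasureTheory.integral_prod f (integrable_restrict_prod hf)

lemma setIntegral_S2_symm {X : Type*} [NormedAddCommGroup X] [NormedSpace ℝ X] {f : ℝ×ℝ → X}
    (hf : Continuous f) :
    ∫ z in S2, f z =
      ∫ y in Icc (0:ℝ) (2*Real.pi), ∫ x in Icc (0:ℝ) (2*Real.pi), f (x, y) := by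
  rw [restrict_S2]
  exact MeasureTheory.integral_prod_symm f (integrable_restrict_prod hf)

/-! ### The two-circle family of integrals -/

section Family

variable (U : E4 → ℝ) (w₀ v₁ v₂ w₁ w₂ : E4)

def Lz (z : ℝ×ℝ) : (ℝ×ℝ) →L[ℝ] E4 :=
  (ContinuousLinearMap.fst ℝ ℝ ℝ).smulRight (circ v₁ v₂ z.1) +
  (ContinuousLinearMap.snd ℝ ℝ ℝ).smulRight (circ w₁ w₂ z.2)

lemma Lz_apply (z : ℝ×ℝ) (h : ℝ×ℝ) :
    Lz v₁ v₂ w₁ w₂ z h = h.1 • circ v₁ v₂ z.1 + h.2 • circ w₁ w₂ z.2 := by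
  simp [Lz]

lemma contLz : Continuous fun z => Lz v₁ v₂ w₁ w₂ z := by
  apply Continuous.add
  · exact (ContinuousLinearMap.smulRightL ℝ (ℝ×ℝ) E4
      (ContinuousLinearMap.fst ℝ ℝ ℝ)).continuous.comp ((contCirc v₁ v₂).comp continuous_fst)
  · exact (ContinuousLinearMap.smulRightL ℝ (ℝ×ℝ) E4
      (ContinuousLinearMap.snd ℝ ℝ ℝ)).continuous.comp ((contCirc w₁ w₂).comp continuous_snd)

def cpt (q z : ℝ×ℝ) : E4 := w₀ + Lz v₁ v₂ w₁ w₂ z q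

lemma cpt_eq (q z : ℝ×ℝ) :
    cpt w₀ v₁ v₂ w₁ w₂ q z = w₀ + q.1 • circ v₁ v₂ z.1 + q.2 • circ w₁ w₂ z.2 := by
  simp [cpt, Lz_apply, add_assoc]

lemma contCpt : Continuous fun p : (ℝ×ℝ)×(ℝ×ℝ) => cpt w₀ v₁ v₂ w₁ w₂ p.1 p.2 :=
  continuous_const.add (((contLz v₁ v₂ w₁ w₂).comp continuous_snd).clm_apply continuous_fst)

lemma contCpt' (q₀ : ℝ×ℝ) : Continuous fun z => cpt w₀ v₁ v₂ w₁ w₂ q₀ z :=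
  continuous_const.add ((contLz v₁ v₂ w₁ w₂).clm_apply continuous_const)

lemma hasFDerivAt_cpt (z q : ℝ×ℝ) :
    HasFDerivAt (fun q => cpt w₀ v₁ v₂ w₁ w₂ q z) (Lz v₁ v₂ w₁ w₂ z) q :=
  (Lz v₁ v₂ w₁ w₂ z).hasFDerivAt.const_add w₀

lemma hasDerivAt_cpt_theta (q : ℝ×ℝ) (y θ : ℝ) :
    HasDerivAt (fun θ => cpt w₀ v₁ v₂ w₁ w₂ q (θ, y)) (q.1 • dcirc v₁ v₂ θ) θ := by
  have he : (fun θ => cpt w₀ v₁ v₂ w₁ w₂ q (θ, y))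
      = fun θ => (q.1 • circ v₁ v₂ θ) + (w₀ + q.2 • circ w₁ w₂ y) := by
    funext θ; rw [cpt_eq]; abel
  rw [he]
  exact ((hasDerivAt_circ v₁ v₂ θ).const_smul q.1).add_const _

lemma hasDerivAt_cpt_phi (q : ℝ×ℝ) (x φ : ℝ) :
    HasDerivAt (fun φ => cpt w₀ v₁ v₂ w₁ w₂ q (x, φ)) (q.2 • dcirc w₁ w₂ φ) φ := by
  have he : (fun φ => cpt w₀ v₁ v₂ w₁ w₂ q (x, φ))
      = fun φ => (q.2 • circ w₁ w₂ φ) + (w₀ + q.1 • circ v₁ v₂ x) := by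
    funext φ; rw [cpt_eq]; abel
  rw [he]
  exact ((hasDerivAt_circ w₁ w₂ φ).const_smul q.2).add_const _

def KK (q : ℝ×ℝ) : ℝ := ∫ z in S2, U (cpt w₀ v₁ v₂ w₁ w₂ q z)
def K1 (q : ℝ×ℝ) : ℝ := ∫ z in S2, Up U (cpt w₀ v₁ v₂ w₁ w₂ q z) (circ v₁ v₂ z.1)
def K2 (q : ℝ×ℝ) : ℝ := ∫ z in S2, Up U (cpt w₀ v₁ v₂ w₁ w₂ q z) (circ w₁ w₂ z.2)
def K11 (q : ℝ×ℝ) : ℝ :=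
  ∫ z in S2, Upp U (cpt w₀ v₁ v₂ w₁ w₂ q z) (circ v₁ v₂ z.1) (circ v₁ v₂ z.1)
def K12 (q : ℝ×ℝ) : ℝ :=
  ∫ z in S2, Upp U (cpt w₀ v₁ v₂ w₁ w₂ q z) (circ v₁ v₂ z.1) (circ w₁ w₂ z.2)
def K22 (q : ℝ×ℝ) : ℝ :=
  ∫ z in S2, Upp U (cpt w₀ v₁ v₂ w₁ w₂ q z) (circ w₁ w₂ z.2) (circ w₁ w₂ z.2)

variable {U}

lemma contI1 (hU : ContDiff ℝ 2 U) :
    Continuous fun p : (ℝ×ℝ)×(ℝ×ℝ) =>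
      Up U (cpt w₀ v₁ v₂ w₁ w₂ p.1 p.2) (circ v₁ v₂ p.2.1) :=
  ((contUp hU).comp (contCpt w₀ v₁ v₂ w₁ w₂)).clm_apply
    ((contCirc v₁ v₂).comp (continuous_fst.comp continuous_snd))

lemma contI2 (hU : ContDiff ℝ 2 U) :
    Continuous fun p : (ℝ×ℝ)×(ℝ×ℝ) =>
      Up U (cpt w₀ v₁ v₂ w₁ w₂ p.1 p.2) (circ w₁ w₂ p.2.2) :=
  ((contUp hU).comp (contCpt w₀ v₁ v₂ w₁ w₂)).clm_apply
    ((contCirc w₁ w₂).comp (continuous_snd.comp continuous_snd))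

lemma contKK (hU : ContDiff ℝ 2 U) : Continuous (KK U w₀ v₁ v₂ w₁ w₂) :=
  contIntegral isCompact_S2 (hU.continuous.comp (contCpt w₀ v₁ v₂ w₁ w₂))

lemma contK1 (hU : ContDiff ℝ 2 U) : Continuous (K1 U w₀ v₁ v₂ w₁ w₂) :=
  contIntegral isCompact_S2 (contI1 w₀ v₁ v₂ w₁ w₂ hU)

lemma contK2 (hU : ContDiff ℝ 2 U) : Continuous (K2 U w₀ v₁ v₂ w₁ w₂) :=
  contIntegral isCompact_S2 (contI2 w₀ v₁ v₂ w₁ w₂ hU)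

lemma contK11 (hU : ContDiff ℝ 2 U) : Continuous (K11 U w₀ v₁ v₂ w₁ w₂) :=
  contIntegral isCompact_S2 <|
    (((contUpp hU).comp (contCpt w₀ v₁ v₂ w₁ w₂)).clm_apply
      ((contCirc v₁ v₂).comp (continuous_fst.comp continuous_snd))).clm_apply
      ((contCirc v₁ v₂).comp (continuous_fst.comp continuous_snd))

lemma contK12 (hU : ContDiff ℝ 2 U) : Continuous (K12 U w₀ v₁ v₂ w₁ w₂) :=
  contIntegral isCompact_S2 <|
    (((contUpp hU).comp (contCpt w₀ v₁ v₂ w₁ w₂)).clm_apply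
      ((contCirc v₁ v₂).comp (continuous_fst.comp continuous_snd))).clm_apply
      ((contCirc w₁ w₂).comp (continuous_snd.comp continuous_snd))

lemma contK22 (hU : ContDiff ℝ 2 U) : Continuous (K22 U w₀ v₁ v₂ w₁ w₂) :=
  contIntegral isCompact_S2 <|
    (((contUpp hU).comp (contCpt w₀ v₁ v₂ w₁ w₂)).clm_apply
      ((contCirc w₁ w₂).comp (continuous_snd.comp continuous_snd))).clm_apply
      ((contCirc w₁ w₂).comp (continuous_snd.comp continuous_snd))

lemma hasFDerivAt_KK (hU : ContDiff ℝ 2 U) (q₀ : ℝ×ℝ) :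
    HasFDerivAt (KK U w₀ v₁ v₂ w₁ w₂)
      (∫ z in S2, (Up U (cpt w₀ v₁ v₂ w₁ w₂ q₀ z)).comp (Lz v₁ v₂ w₁ w₂ z)) q₀ :=
  fderivIntegral isCompact_S2 (hU.continuous.comp (contCpt w₀ v₁ v₂ w₁ w₂))
    (((contUp hU).comp (contCpt w₀ v₁ v₂ w₁ w₂)).clm_comp
      ((contLz v₁ v₂ w₁ w₂).comp continuous_snd))
    (fun z q => (diffU hU _).comp q (hasFDerivAt_cpt w₀ v₁ v₂ w₁ w₂ z q)) q₀

lemma contFlip (hU : ContDiff ℝ 2 U) :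
    Continuous fun p : (ℝ×ℝ)×(ℝ×ℝ) =>
      ((Upp U (cpt w₀ v₁ v₂ w₁ w₂ p.1 p.2)).comp (Lz v₁ v₂ w₁ w₂ p.2)).flip := by
  have h2 : Continuous fun p : (ℝ×ℝ)×(ℝ×ℝ) =>
      (Upp U (cpt w₀ v₁ v₂ w₁ w₂ p.1 p.2)).comp (Lz v₁ v₂ w₁ w₂ p.2) :=
    ((contUpp hU).comp (contCpt w₀ v₁ v₂ w₁ w₂)).clm_comp
      ((contLz v₁ v₂ w₁ w₂).comp continuous_snd)
  exact (ContinuousLinearMap.flipₗᵢ ℝ (ℝ×ℝ) E4 ℝ).continuous.comp h2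

lemma hasFDerivAt_K1 (hU : ContDiff ℝ 2 U) (q₀ : ℝ×ℝ) :
    HasFDerivAt (K1 U w₀ v₁ v₂ w₁ w₂)
      (∫ z in S2, ((Upp U (cpt w₀ v₁ v₂ w₁ w₂ q₀ z)).comp (Lz v₁ v₂ w₁ w₂ z)).flip
        (circ v₁ v₂ z.1)) q₀ :=
  fderivIntegral (Φ := fun q z => Up U (cpt w₀ v₁ v₂ w₁ w₂ q z) (circ v₁ v₂ z.1))
    (Φ' := fun q z => ((Upp U (cpt w₀ v₁ v₂ w₁ w₂ q z)).comp (Lz v₁ v₂ w₁ w₂ z)).flip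
      (circ v₁ v₂ z.1))
    isCompact_S2 (contI1 w₀ v₁ v₂ w₁ w₂ hU)
    ((contFlip w₀ v₁ v₂ w₁ w₂ hU).clm_apply
      ((contCirc v₁ v₂).comp (continuous_fst.comp continuous_snd)))
    (fun z q => by
      have h1 := (diffUp hU (cpt w₀ v₁ v₂ w₁ w₂ q z)).comp q
        (hasFDerivAt_cpt w₀ v₁ v₂ w₁ w₂ z q)
      have h2 := h1.clm_apply (hasFDerivAt_const (circ v₁ v₂ z.1) q)
      simpa using h2) q₀

lemma hasFDerivAt_K2 (hU : ContDiff ℝ 2 U) (q₀ : ℝ×ℝ) :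
    HasFDerivAt (K2 U w₀ v₁ v₂ w₁ w₂)
      (∫ z in S2, ((Upp U (cpt w₀ v₁ v₂ w₁ w₂ q₀ z)).comp (Lz v₁ v₂ w₁ w₂ z)).flip
        (circ w₁ w₂ z.2)) q₀ :=
  fderivIntegral (Φ := fun q z => Up U (cpt w₀ v₁ v₂ w₁ w₂ q z) (circ w₁ w₂ z.2))
    (Φ' := fun q z => ((Upp U (cpt w₀ v₁ v₂ w₁ w₂ q z)).comp (Lz v₁ v₂ w₁ w₂ z)).flip
      (circ w₁ w₂ z.2))
    isCompact_S2 (contI2 w₀ v₁ v₂ w₁ w₂ hU)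
    ((contFlip w₀ v₁ v₂ w₁ w₂ hU).clm_apply
      ((contCirc w₁ w₂).comp (continuous_snd.comp continuous_snd)))
    (fun z q => by
      have h1 := (diffUp hU (cpt w₀ v₁ v₂ w₁ w₂ q z)).comp q
        (hasFDerivAt_cpt w₀ v₁ v₂ w₁ w₂ z q)
      have h2 := h1.clm_apply (hasFDerivAt_const (circ w₁ w₂ z.2) q)
      simpa using h2) q₀

lemma hasDerivAt_KK_comp (hU : ContDiff ℝ 2 U) {γ : ℝ → ℝ×ℝ} {γ' : ℝ×ℝ} {σ : ℝ}
    (hγ : HasDerivAt γ γ' σ) :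
    HasDerivAt (fun s => KK U w₀ v₁ v₂ w₁ w₂ (γ s))
      (γ'.1 * K1 U w₀ v₁ v₂ w₁ w₂ (γ σ) + γ'.2 * K2 U w₀ v₁ v₂ w₁ w₂ (γ σ)) σ := by
  have h := (hasFDerivAt_KK w₀ v₁ v₂ w₁ w₂ hU (γ σ)).comp_hasDerivAt σ hγ
  refine h.congr_deriv ?_
  have hc1 : Continuous fun z : ℝ×ℝ => Up U (cpt w₀ v₁ v₂ w₁ w₂ (γ σ) z) (circ v₁ v₂ z.1) :=
    ((contUp hU).comp (contCpt' w₀ v₁ v₂ w₁ w₂ (γ σ))).clm_apply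
      ((contCirc v₁ v₂).comp continuous_fst)
  have hc2 : Continuous fun z : ℝ×ℝ => Up U (cpt w₀ v₁ v₂ w₁ w₂ (γ σ) z) (circ w₁ w₂ z.2) :=
    ((contUp hU).comp (contCpt' w₀ v₁ v₂ w₁ w₂ (γ σ))).clm_apply
      ((contCirc w₁ w₂).comp continuous_snd)
  have hint : IntegrableOn (fun z => (Up U (cpt w₀ v₁ v₂ w₁ w₂ (γ σ) z)).comp
      (Lz v₁ v₂ w₁ w₂ z)) S2 :=
    contIntegrableOn isCompact_S2
      (((contUp hU).comp (contCpt' w₀ v₁ v₂ w₁ w₂ (γ σ))).clm_comp (contLz v₁ v₂ w₁ w₂))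
  rw [ContinuousLinearMap.integral_apply hint]
  have hpt : ∀ z : ℝ×ℝ, ((Up U (cpt w₀ v₁ v₂ w₁ w₂ (γ σ) z)).comp (Lz v₁ v₂ w₁ w₂ z)) γ'
      = γ'.1 * Up U (cpt w₀ v₁ v₂ w₁ w₂ (γ σ) z) (circ v₁ v₂ z.1)
        + γ'.2 * Up U (cpt w₀ v₁ v₂ w₁ w₂ (γ σ) z) (circ w₁ w₂ z.2) := by
    intro z
    rw [ContinuousLinearMap.comp_apply, Lz_apply, map_add, _root_.map_smul, _root_.map_smul]
    simp [smul_eq_mul]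
  rw [show (fun z => ((Up U (cpt w₀ v₁ v₂ w₁ w₂ (γ σ) z)).comp (Lz v₁ v₂ w₁ w₂ z)) γ')
      = fun z => γ'.1 * Up U (cpt w₀ v₁ v₂ w₁ w₂ (γ σ) z) (circ v₁ v₂ z.1)
        + γ'.2 * Up U (cpt w₀ v₁ v₂ w₁ w₂ (γ σ) z) (circ w₁ w₂ z.2) from funext hpt]
  rw [integral_add ((contIntegrableOn isCompact_S2 hc1).const_mul γ'.1)
      ((contIntegrableOn isCompact_S2 hc2).const_mul γ'.2),
    MeasureTheory.integral_const_mul, MeasureTheory.integral_const_mul]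
  rfl

lemma hasDerivAt_K1_comp (hU : ContDiff ℝ 2 U) {γ : ℝ → ℝ×ℝ} {γ' : ℝ×ℝ} {σ : ℝ}
    (hγ : HasDerivAt γ γ' σ) :
    HasDerivAt (fun s => K1 U w₀ v₁ v₂ w₁ w₂ (γ s))
      (γ'.1 * K11 U w₀ v₁ v₂ w₁ w₂ (γ σ) + γ'.2 * K12 U w₀ v₁ v₂ w₁ w₂ (γ σ)) σ := by
  have h := (hasFDerivAt_K1 w₀ v₁ v₂ w₁ w₂ hU (γ σ)).comp_hasDerivAt σ hγ
  refine h.congr_deriv ?_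
  have hcv : Continuous fun z : ℝ×ℝ => circ v₁ v₂ z.1 := (contCirc v₁ v₂).comp continuous_fst
  have hcw : Continuous fun z : ℝ×ℝ => circ w₁ w₂ z.2 := (contCirc w₁ w₂).comp continuous_snd
  have hcupp : Continuous fun z : ℝ×ℝ => Upp U (cpt w₀ v₁ v₂ w₁ w₂ (γ σ) z) :=
    (contUpp hU).comp (contCpt' w₀ v₁ v₂ w₁ w₂ (γ σ))
  have hc1 : Continuous fun z : ℝ×ℝ =>
      Upp U (cpt w₀ v₁ v₂ w₁ w₂ (γ σ) z) (circ v₁ v₂ z.1) (circ v₁ v₂ z.1) :=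
    (hcupp.clm_apply hcv).clm_apply hcv
  have hc2 : Continuous fun z : ℝ×ℝ =>
      Upp U (cpt w₀ v₁ v₂ w₁ w₂ (γ σ) z) (circ v₁ v₂ z.1) (circ w₁ w₂ z.2) :=
    (hcupp.clm_apply hcv).clm_apply hcw
  have hint : IntegrableOn (fun z => ((Upp U (cpt w₀ v₁ v₂ w₁ w₂ (γ σ) z)).comp
      (Lz v₁ v₂ w₁ w₂ z)).flip (circ v₁ v₂ z.1)) S2 := by
    apply contIntegrableOn isCompact_S2
    have h2 : Continuous fun z : ℝ×ℝ =>
        (Upp U (cpt w₀ v₁ v₂ w₁ w₂ (γ σ) z)).comp (Lz v₁ v₂ w₁ w₂ z) :=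
      hcupp.clm_comp (contLz v₁ v₂ w₁ w₂)
    exact ((ContinuousLinearMap.flipₗᵢ ℝ (ℝ×ℝ) E4 ℝ).continuous.comp h2).clm_apply hcv
  rw [ContinuousLinearMap.integral_apply hint]
  have hpt : ∀ z : ℝ×ℝ, (((Upp U (cpt w₀ v₁ v₂ w₁ w₂ (γ σ) z)).comp
        (Lz v₁ v₂ w₁ w₂ z)).flip (circ v₁ v₂ z.1)) γ'
      = γ'.1 * Upp U (cpt w₀ v₁ v₂ w₁ w₂ (γ σ) z) (circ v₁ v₂ z.1) (circ v₁ v₂ z.1)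
        + γ'.2 * Upp U (cpt w₀ v₁ v₂ w₁ w₂ (γ σ) z) (circ v₁ v₂ z.1) (circ w₁ w₂ z.2) := by
    intro z
    rw [ContinuousLinearMap.flip_apply, ContinuousLinearMap.comp_apply, Lz_apply,
      map_add, _root_.map_smul, _root_.map_smul]
    simp only [ContinuousLinearMap.add_apply, ContinuousLinearMap.smul_apply, smul_eq_mul]
    rw [uppSymm hU _ (circ w₁ w₂ z.2) (circ v₁ v₂ z.1)]
  rw [show (fun z => (((Upp U (cpt w₀ v₁ v₂ w₁ w₂ (γ σ) z)).comp
        (Lz v₁ v₂ w₁ w₂ z)).flip (circ v₁ v₂ z.1)) γ')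
      = fun z => γ'.1 * Upp U (cpt w₀ v₁ v₂ w₁ w₂ (γ σ) z) (circ v₁ v₂ z.1) (circ v₁ v₂ z.1)
        + γ'.2 * Upp U (cpt w₀ v₁ v₂ w₁ w₂ (γ σ) z) (circ v₁ v₂ z.1) (circ w₁ w₂ z.2)
      from funext hpt]
  rw [integral_add ((contIntegrableOn isCompact_S2 hc1).const_mul γ'.1)
      ((contIntegrableOn isCompact_S2 hc2).const_mul γ'.2),
    MeasureTheory.integral_const_mul, MeasureTheory.integral_const_mul]
  rfl

lemma hasDerivAt_K2_comp (hU : ContDiff ℝ 2 U) {γ : ℝ → ℝ×ℝ} {γ' : ℝ×ℝ} {σ : ℝ}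
    (hγ : HasDerivAt γ γ' σ) :
    HasDerivAt (fun s => K2 U w₀ v₁ v₂ w₁ w₂ (γ s))
      (γ'.1 * K12 U w₀ v₁ v₂ w₁ w₂ (γ σ) + γ'.2 * K22 U w₀ v₁ v₂ w₁ w₂ (γ σ)) σ := by
  have h := (hasFDerivAt_K2 w₀ v₁ v₂ w₁ w₂ hU (γ σ)).comp_hasDerivAt σ hγ
  refine h.congr_deriv ?_
  have hcv : Continuous fun z : ℝ×ℝ => circ v₁ v₂ z.1 := (contCirc v₁ v₂).comp continuous_fst
  have hcw : Continuous fun z : ℝ×ℝ => circ w₁ w₂ z.2 := (contCirc w₁ w₂).comp continuous_snd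
  have hcupp : Continuous fun z : ℝ×ℝ => Upp U (cpt w₀ v₁ v₂ w₁ w₂ (γ σ) z) :=
    (contUpp hU).comp (contCpt' w₀ v₁ v₂ w₁ w₂ (γ σ))
  have hc1 : Continuous fun z : ℝ×ℝ =>
      Upp U (cpt w₀ v₁ v₂ w₁ w₂ (γ σ) z) (circ v₁ v₂ z.1) (circ w₁ w₂ z.2) :=
    (hcupp.clm_apply hcv).clm_apply hcw
  have hc2 : Continuous fun z : ℝ×ℝ =>
      Upp U (cpt w₀ v₁ v₂ w₁ w₂ (γ σ) z) (circ w₁ w₂ z.2) (circ w₁ w₂ z.2) :=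
    (hcupp.clm_apply hcw).clm_apply hcw
  have hint : IntegrableOn (fun z => ((Upp U (cpt w₀ v₁ v₂ w₁ w₂ (γ σ) z)).comp
      (Lz v₁ v₂ w₁ w₂ z)).flip (circ w₁ w₂ z.2)) S2 := by
    apply contIntegrableOn isCompact_S2
    have h2 : Continuous fun z : ℝ×ℝ =>
        (Upp U (cpt w₀ v₁ v₂ w₁ w₂ (γ σ) z)).comp (Lz v₁ v₂ w₁ w₂ z) :=
      hcupp.clm_comp (contLz v₁ v₂ w₁ w₂)
    exact ((ContinuousLinearMap.flipₗᵢ ℝ (ℝ×ℝ) E4 ℝ).continuous.comp h2).clm_apply hcw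
  rw [ContinuousLinearMap.integral_apply hint]
  have hpt : ∀ z : ℝ×ℝ, (((Upp U (cpt w₀ v₁ v₂ w₁ w₂ (γ σ) z)).comp
        (Lz v₁ v₂ w₁ w₂ z)).flip (circ w₁ w₂ z.2)) γ'
      = γ'.1 * Upp U (cpt w₀ v₁ v₂ w₁ w₂ (γ σ) z) (circ v₁ v₂ z.1) (circ w₁ w₂ z.2)
        + γ'.2 * Upp U (cpt w₀ v₁ v₂ w₁ w₂ (γ σ) z) (circ w₁ w₂ z.2) (circ w₁ w₂ z.2) := by
    intro z
    rw [ContinuousLinearMap.flip_apply, ContinuousLinearMap.comp_apply, Lz_apply,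
      map_add, _root_.map_smul, _root_.map_smul]
    simp [smul_eq_mul]
  rw [show (fun z => (((Upp U (cpt w₀ v₁ v₂ w₁ w₂ (γ σ) z)).comp
        (Lz v₁ v₂ w₁ w₂ z)).flip (circ w₁ w₂ z.2)) γ')
      = fun z => γ'.1 * Upp U (cpt w₀ v₁ v₂ w₁ w₂ (γ σ) z) (circ v₁ v₂ z.1) (circ w₁ w₂ z.2)
        + γ'.2 * Upp U (cpt w₀ v₁ v₂ w₁ w₂ (γ σ) z) (circ w₁ w₂ z.2) (circ w₁ w₂ z.2)
      from funext hpt]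
  rw [integral_add ((contIntegrableOn isCompact_S2 hc1).const_mul γ'.1)
      ((contIntegrableOn isCompact_S2 hc2).const_mul γ'.2),
    MeasureTheory.integral_const_mul, MeasureTheory.integral_const_mul]
  rfl

lemma cpt_axis (ρ : ℝ) (z : ℝ×ℝ) :
    cpt w₀ v₁ v₂ w₁ w₂ (ρ, (0:ℝ)) z = w₀ + ρ • circ v₁ v₂ z.1 := by
  rw [cpt_eq]; simp

variable {w₀ v₁ v₂ w₁ w₂} in
lemma darboux1 (hU : ContDiff ℝ 2 U) (q : ℝ×ℝ) :
    q.1 * K1 U w₀ v₁ v₂ w₁ w₂ q + q.1^2 * K11 U w₀ v₁ v₂ w₁ w₂ q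
      = q.1^2 * ∫ z in S2, (Upp U (cpt w₀ v₁ v₂ w₁ w₂ q z) v₁ v₁
          + Upp U (cpt w₀ v₁ v₂ w₁ w₂ q z) v₂ v₂) := by
  have hcpt := contCpt' w₀ v₁ v₂ w₁ w₂ q
  have hcv : Continuous fun z : ℝ×ℝ => circ v₁ v₂ z.1 := (contCirc v₁ v₂).comp continuous_fst
  have hcdv : Continuous fun z : ℝ×ℝ => dcirc v₁ v₂ z.1 := by
    have h0 : Continuous (dcirc v₁ v₂) := (Real.continuous_sin.neg.smul continuous_const).add
      (Real.continuous_cos.smul continuous_const)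
    exact h0.comp continuous_fst
  have hcA : Continuous fun z : ℝ×ℝ => Up U (cpt w₀ v₁ v₂ w₁ w₂ q z) (circ v₁ v₂ z.1) :=
    ((contUp hU).comp hcpt).clm_apply hcv
  have hcB : Continuous fun z : ℝ×ℝ =>
      Upp U (cpt w₀ v₁ v₂ w₁ w₂ q z) (circ v₁ v₂ z.1) (circ v₁ v₂ z.1) :=
    (((contUpp hU).comp hcpt).clm_apply hcv).clm_apply hcv
  have hcD : Continuous fun z : ℝ×ℝ =>
      Upp U (cpt w₀ v₁ v₂ w₁ w₂ q z) (dcirc v₁ v₂ z.1) (dcirc v₁ v₂ z.1) :=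
    (((contUpp hU).comp hcpt).clm_apply hcdv).clm_apply hcdv
  have hcC : Continuous fun z : ℝ×ℝ => (Upp U (cpt w₀ v₁ v₂ w₁ w₂ q z) v₁ v₁
      + Upp U (cpt w₀ v₁ v₂ w₁ w₂ q z) v₂ v₂) :=
    ((((contUpp hU).comp hcpt).clm_apply continuous_const).clm_apply continuous_const).add
      ((((contUpp hU).comp hcpt).clm_apply continuous_const).clm_apply continuous_const)
  have hcψ : Continuous fun z : ℝ×ℝ =>
      (q.1^2 * Upp U (cpt w₀ v₁ v₂ w₁ w₂ q z) (dcirc v₁ v₂ z.1) (dcirc v₁ v₂ z.1)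
        - q.1 * Up U (cpt w₀ v₁ v₂ w₁ w₂ q z) (circ v₁ v₂ z.1)) :=
    (continuous_const.mul hcD).sub (continuous_const.mul hcA)
  have hTzero : (∫ z in S2,
      (q.1^2 * Upp U (cpt w₀ v₁ v₂ w₁ w₂ q z) (dcirc v₁ v₂ z.1) (dcirc v₁ v₂ z.1)
        - q.1 * Up U (cpt w₀ v₁ v₂ w₁ w₂ q z) (circ v₁ v₂ z.1))) = 0 := by
    rw [setIntegral_S2_symm hcψ]
    have hinner : ∀ y : ℝ, (∫ x in Icc (0:ℝ) (2*Real.pi),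
        (q.1^2 * Upp U (cpt w₀ v₁ v₂ w₁ w₂ q (x, y)) (dcirc v₁ v₂ (x,y).1) (dcirc v₁ v₂ (x,y).1)
          - q.1 * Up U (cpt w₀ v₁ v₂ w₁ w₂ q (x, y)) (circ v₁ v₂ (x,y).1))) = 0 := by
      intro y
      rw [Icc_intervalIntegral]
      have hg : ∀ θ ∈ uIcc (0:ℝ) (2*Real.pi),
          HasDerivAt (fun θ => q.1 * Up U (cpt w₀ v₁ v₂ w₁ w₂ q (θ, y)) (dcirc v₁ v₂ θ))
            (q.1^2 * Upp U (cpt w₀ v₁ v₂ w₁ w₂ q (θ, y)) (dcirc v₁ v₂ (θ,y).1) (dcirc v₁ v₂ (θ,y).1)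
              - q.1 * Up U (cpt w₀ v₁ v₂ w₁ w₂ q (θ, y)) (circ v₁ v₂ (θ,y).1)) θ := by
        intro θ _
        have hc := (diffUp hU _).comp_hasDerivAt θ (hasDerivAt_cpt_theta w₀ v₁ v₂ w₁ w₂ q y θ)
        have hd := hc.clm_apply (hasDerivAt_dcirc v₁ v₂ θ)
        have h3 := hd.const_mul q.1
        refine h3.congr_deriv ?_
        simp only [Function.comp_apply, _root_.map_smul, ContinuousLinearMap.smul_apply,
          smul_eq_mul, ContinuousLinearMap.add_apply, map_neg, ContinuousLinearMap.neg_apply]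
        ring
      rw [intervalIntegral.integral_eq_sub_of_hasDerivAt hg
        ((hcψ.comp (continuous_id.prodMk continuous_const)).intervalIntegrable _ _)]
      simp [cpt_eq, circ_per, dcirc_per]
    simp only [hinner, MeasureTheory.integral_zero]
  have hsum : q.1 * K1 U w₀ v₁ v₂ w₁ w₂ q + q.1^2 * K11 U w₀ v₁ v₂ w₁ w₂ q
      = ∫ z in S2, (q.1 * Up U (cpt w₀ v₁ v₂ w₁ w₂ q z) (circ v₁ v₂ z.1)
          + q.1^2 * Upp U (cpt w₀ v₁ v₂ w₁ w₂ q z) (circ v₁ v₂ z.1) (circ v₁ v₂ z.1)) := by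
    rw [integral_add ((contIntegrableOn isCompact_S2 hcA).const_mul _)
        ((contIntegrableOn isCompact_S2 hcB).const_mul _),
      MeasureTheory.integral_const_mul, MeasureTheory.integral_const_mul]
    rfl
  rw [hsum]
  have hptw : ∀ z : ℝ×ℝ, (q.1 * Up U (cpt w₀ v₁ v₂ w₁ w₂ q z) (circ v₁ v₂ z.1)
      + q.1^2 * Upp U (cpt w₀ v₁ v₂ w₁ w₂ q z) (circ v₁ v₂ z.1) (circ v₁ v₂ z.1))
      = q.1^2 * (Upp U (cpt w₀ v₁ v₂ w₁ w₂ q z) v₁ v₁ + Upp U (cpt w₀ v₁ v₂ w₁ w₂ q z) v₂ v₂)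
        - (q.1^2 * Upp U (cpt w₀ v₁ v₂ w₁ w₂ q z) (dcirc v₁ v₂ z.1) (dcirc v₁ v₂ z.1)
          - q.1 * Up U (cpt w₀ v₁ v₂ w₁ w₂ q z) (circ v₁ v₂ z.1)) := by
    intro z
    have hrot := rot_identity (Upp U (cpt w₀ v₁ v₂ w₁ w₂ q z)) v₁ v₂ z.1
    linear_combination q.1^2 * hrot
  rw [show (fun z => (q.1 * Up U (cpt w₀ v₁ v₂ w₁ w₂ q z) (circ v₁ v₂ z.1)
      + q.1^2 * Upp U (cpt w₀ v₁ v₂ w₁ w₂ q z) (circ v₁ v₂ z.1) (circ v₁ v₂ z.1)))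
      = fun z => q.1^2 * (Upp U (cpt w₀ v₁ v₂ w₁ w₂ q z) v₁ v₁
          + Upp U (cpt w₀ v₁ v₂ w₁ w₂ q z) v₂ v₂)
        - (q.1^2 * Upp U (cpt w₀ v₁ v₂ w₁ w₂ q z) (dcirc v₁ v₂ z.1) (dcirc v₁ v₂ z.1)
          - q.1 * Up U (cpt w₀ v₁ v₂ w₁ w₂ q z) (circ v₁ v₂ z.1)) from funext hptw]
  rw [integral_sub ((contIntegrableOn isCompact_S2 hcC).const_mul _)
      (contIntegrableOn isCompact_S2 hcψ), hTzero, MeasureTheory.integral_const_mul, sub_zero]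

variable {w₀ v₁ v₂ w₁ w₂} in
lemma darboux2 (hU : ContDiff ℝ 2 U) (q : ℝ×ℝ) :
    q.2 * K2 U w₀ v₁ v₂ w₁ w₂ q + q.2^2 * K22 U w₀ v₁ v₂ w₁ w₂ q
      = q.2^2 * ∫ z in S2, (Upp U (cpt w₀ v₁ v₂ w₁ w₂ q z) w₁ w₁
          + Upp U (cpt w₀ v₁ v₂ w₁ w₂ q z) w₂ w₂) := by
  have hcpt := contCpt' w₀ v₁ v₂ w₁ w₂ q
  have hcv : Continuous fun z : ℝ×ℝ => circ w₁ w₂ z.2 := (contCirc w₁ w₂).comp continuous_snd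
  have hcdv : Continuous fun z : ℝ×ℝ => dcirc w₁ w₂ z.2 := by
    have h0 : Continuous (dcirc w₁ w₂) := (Real.continuous_sin.neg.smul continuous_const).add
      (Real.continuous_cos.smul continuous_const)
    exact h0.comp continuous_snd
  have hcA : Continuous fun z : ℝ×ℝ => Up U (cpt w₀ v₁ v₂ w₁ w₂ q z) (circ w₁ w₂ z.2) :=
    ((contUp hU).comp hcpt).clm_apply hcv
  have hcB : Continuous fun z : ℝ×ℝ =>
      Upp U (cpt w₀ v₁ v₂ w₁ w₂ q z) (circ w₁ w₂ z.2) (circ w₁ w₂ z.2) :=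
    (((contUpp hU).comp hcpt).clm_apply hcv).clm_apply hcv
  have hcD : Continuous fun z : ℝ×ℝ =>
      Upp U (cpt w₀ v₁ v₂ w₁ w₂ q z) (dcirc w₁ w₂ z.2) (dcirc w₁ w₂ z.2) :=
    (((contUpp hU).comp hcpt).clm_apply hcdv).clm_apply hcdv
  have hcC : Continuous fun z : ℝ×ℝ => (Upp U (cpt w₀ v₁ v₂ w₁ w₂ q z) w₁ w₁
      + Upp U (cpt w₀ v₁ v₂ w₁ w₂ q z) w₂ w₂) :=
    ((((contUpp hU).comp hcpt).clm_apply continuous_const).clm_apply continuous_const).add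
      ((((contUpp hU).comp hcpt).clm_apply continuous_const).clm_apply continuous_const)
  have hcψ : Continuous fun z : ℝ×ℝ =>
      (q.2^2 * Upp U (cpt w₀ v₁ v₂ w₁ w₂ q z) (dcirc w₁ w₂ z.2) (dcirc w₁ w₂ z.2)
        - q.2 * Up U (cpt w₀ v₁ v₂ w₁ w₂ q z) (circ w₁ w₂ z.2)) :=
    (continuous_const.mul hcD).sub (continuous_const.mul hcA)
  have hTzero : (∫ z in S2,
      (q.2^2 * Upp U (cpt w₀ v₁ v₂ w₁ w₂ q z) (dcirc w₁ w₂ z.2) (dcirc w₁ w₂ z.2)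
        - q.2 * Up U (cpt w₀ v₁ v₂ w₁ w₂ q z) (circ w₁ w₂ z.2))) = 0 := by
    rw [setIntegral_S2 hcψ]
    have hinner : ∀ x : ℝ, (∫ y in Icc (0:ℝ) (2*Real.pi),
        (q.2^2 * Upp U (cpt w₀ v₁ v₂ w₁ w₂ q (x, y)) (dcirc w₁ w₂ (x,y).2) (dcirc w₁ w₂ (x,y).2)
          - q.2 * Up U (cpt w₀ v₁ v₂ w₁ w₂ q (x, y)) (circ w₁ w₂ (x,y).2))) = 0 := by
      intro x
      rw [Icc_intervalIntegral]
      have hg : ∀ φ ∈ uIcc (0:ℝ) (2*Real.pi),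
          HasDerivAt (fun φ => q.2 * Up U (cpt w₀ v₁ v₂ w₁ w₂ q (x, φ)) (dcirc w₁ w₂ φ))
            (q.2^2 * Upp U (cpt w₀ v₁ v₂ w₁ w₂ q (x, φ)) (dcirc w₁ w₂ (x,φ).2) (dcirc w₁ w₂ (x,φ).2)
              - q.2 * Up U (cpt w₀ v₁ v₂ w₁ w₂ q (x, φ)) (circ w₁ w₂ (x,φ).2)) φ := by
        intro φ _
        have hc := (diffUp hU _).comp_hasDerivAt φ (hasDerivAt_cpt_phi w₀ v₁ v₂ w₁ w₂ q x φ)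
        have hd := hc.clm_apply (hasDerivAt_dcirc w₁ w₂ φ)
        have h3 := hd.const_mul q.2
        refine h3.congr_deriv ?_
        simp only [Function.comp_apply, _root_.map_smul, ContinuousLinearMap.smul_apply,
          smul_eq_mul, ContinuousLinearMap.add_apply, map_neg, ContinuousLinearMap.neg_apply]
        ring
      rw [intervalIntegral.integral_eq_sub_of_hasDerivAt hg
        ((hcψ.comp (continuous_const.prodMk continuous_id)).intervalIntegrable _ _)]
      simp [cpt_eq, circ_per, dcirc_per]
    simp only [hinner, MeasureTheory.integral_zero]
  have hsum : q.2 * K2 U w₀ v₁ v₂ w₁ w₂ q + q.2^2 * K22 U w₀ v₁ v₂ w₁ w₂ q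
      = ∫ z in S2, (q.2 * Up U (cpt w₀ v₁ v₂ w₁ w₂ q z) (circ w₁ w₂ z.2)
          + q.2^2 * Upp U (cpt w₀ v₁ v₂ w₁ w₂ q z) (circ w₁ w₂ z.2) (circ w₁ w₂ z.2)) := by
    rw [integral_add ((contIntegrableOn isCompact_S2 hcA).const_mul _)
        ((contIntegrableOn isCompact_S2 hcB).const_mul _),
      MeasureTheory.integral_const_mul, MeasureTheory.integral_const_mul]
    rfl
  rw [hsum]
  have hptw : ∀ z : ℝ×ℝ, (q.2 * Up U (cpt w₀ v₁ v₂ w₁ w₂ q z) (circ w₁ w₂ z.2)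
      + q.2^2 * Upp U (cpt w₀ v₁ v₂ w₁ w₂ q z) (circ w₁ w₂ z.2) (circ w₁ w₂ z.2))
      = q.2^2 * (Upp U (cpt w₀ v₁ v₂ w₁ w₂ q z) w₁ w₁ + Upp U (cpt w₀ v₁ v₂ w₁ w₂ q z) w₂ w₂)
        - (q.2^2 * Upp U (cpt w₀ v₁ v₂ w₁ w₂ q z) (dcirc w₁ w₂ z.2) (dcirc w₁ w₂ z.2)
          - q.2 * Up U (cpt w₀ v₁ v₂ w₁ w₂ q z) (circ w₁ w₂ z.2)) := by
    intro z
    have hrot := rot_identity (Upp U (cpt w₀ v₁ v₂ w₁ w₂ q z)) w₁ w₂ z.2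
    linear_combination q.2^2 * hrot
  rw [show (fun z => (q.2 * Up U (cpt w₀ v₁ v₂ w₁ w₂ q z) (circ w₁ w₂ z.2)
      + q.2^2 * Upp U (cpt w₀ v₁ v₂ w₁ w₂ q z) (circ w₁ w₂ z.2) (circ w₁ w₂ z.2)))
      = fun z => q.2^2 * (Upp U (cpt w₀ v₁ v₂ w₁ w₂ q z) w₁ w₁
          + Upp U (cpt w₀ v₁ v₂ w₁ w₂ q z) w₂ w₂)
        - (q.2^2 * Upp U (cpt w₀ v₁ v₂ w₁ w₂ q z) (dcirc w₁ w₂ z.2) (dcirc w₁ w₂ z.2)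
          - q.2 * Up U (cpt w₀ v₁ v₂ w₁ w₂ q z) (circ w₁ w₂ z.2)) from funext hptw]
  rw [integral_sub ((contIntegrableOn isCompact_S2 hcC).const_mul _)
      (contIntegrableOn isCompact_S2 hcψ), hTzero, MeasureTheory.integral_const_mul, sub_zero]

lemma K2_axis (hU : ContDiff ℝ 2 U) (ρ : ℝ) : K2 U w₀ v₁ v₂ w₁ w₂ (ρ, (0:ℝ)) = 0 := by
  have hcont : Continuous fun z : ℝ×ℝ =>
      Up U (cpt w₀ v₁ v₂ w₁ w₂ (ρ, (0:ℝ)) z) (circ w₁ w₂ z.2) :=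
    ((contUp hU).comp (contCpt' w₀ v₁ v₂ w₁ w₂ _)).clm_apply
      ((contCirc w₁ w₂).comp continuous_snd)
  rw [show K2 U w₀ v₁ v₂ w₁ w₂ (ρ, (0:ℝ))
    = ∫ z in S2, Up U (cpt w₀ v₁ v₂ w₁ w₂ (ρ, (0:ℝ)) z) (circ w₁ w₂ z.2) from rfl]
  rw [setIntegral_S2 hcont]
  have hinner : ∀ x : ℝ, (∫ y in Icc (0:ℝ) (2*Real.pi),
      Up U (cpt w₀ v₁ v₂ w₁ w₂ (ρ, (0:ℝ)) (x, y)) (circ w₁ w₂ (x,y).2)) = 0 := by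
    intro x
    rw [Icc_intervalIntegral]
    have he : ∀ y : ℝ, Up U (cpt w₀ v₁ v₂ w₁ w₂ (ρ, (0:ℝ)) (x, y)) (circ w₁ w₂ (x,y).2)
        = Real.cos y * Up U (w₀ + ρ • circ v₁ v₂ x) w₁
          + Real.sin y * Up U (w₀ + ρ • circ v₁ v₂ x) w₂ := by
      intro y
      rw [cpt_axis]
      simp [circ, map_add, _root_.map_smul, smul_eq_mul]
    rw [intervalIntegral.integral_congr (fun y _ => he y)]
    rw [intervalIntegral.integral_add (f := fun y => Real.cos y * Up U (w₀ + ρ • circ v₁ v₂ x) w₁)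
      (g := fun y => Real.sin y * Up U (w₀ + ρ • circ v₁ v₂ x) w₂)
      ((Real.continuous_cos.mul continuous_const).intervalIntegrable _ _)
      ((Real.continuous_sin.mul continuous_const).intervalIntegrable _ _),
      intervalIntegral.integral_mul_const, intervalIntegral.integral_mul_const,
      integral_cos, integral_sin]
    simp
  simp only [hinner, MeasureTheory.integral_zero]

lemma KK_axis (ρ : ℝ) : KK U w₀ v₁ v₂ w₁ w₂ (ρ, (0:ℝ)) = KK U w₀ v₁ v₂ v₁ v₂ (ρ, (0:ℝ)) := by
  show (∫ z in S2, U (cpt w₀ v₁ v₂ w₁ w₂ (ρ,(0:ℝ)) z))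
      = ∫ z in S2, U (cpt w₀ v₁ v₂ v₁ v₂ (ρ,(0:ℝ)) z)
  refine integral_congr_ae (.of_forall fun z => ?_)
  show U (cpt w₀ v₁ v₂ w₁ w₂ (ρ,(0:ℝ)) z) = U (cpt w₀ v₁ v₂ v₁ v₂ (ρ,(0:ℝ)) z)
  rw [cpt_axis, cpt_axis]

lemma K1_axis (ρ : ℝ) : K1 U w₀ v₁ v₂ w₁ w₂ (ρ, (0:ℝ)) = K1 U w₀ v₁ v₂ v₁ v₂ (ρ, (0:ℝ)) := by
  show (∫ z in S2, Up U (cpt w₀ v₁ v₂ w₁ w₂ (ρ,(0:ℝ)) z) (circ v₁ v₂ z.1))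
      = ∫ z in S2, Up U (cpt w₀ v₁ v₂ v₁ v₂ (ρ,(0:ℝ)) z) (circ v₁ v₂ z.1)
  refine integral_congr_ae (.of_forall fun z => ?_)
  show Up U (cpt w₀ v₁ v₂ w₁ w₂ (ρ,(0:ℝ)) z) (circ v₁ v₂ z.1)
      = Up U (cpt w₀ v₁ v₂ v₁ v₂ (ρ,(0:ℝ)) z) (circ v₁ v₂ z.1)
  rw [cpt_axis, cpt_axis]

end Family

end Asg


open MeasureTheory Set Filter intervalIntegral
open scoped Topology

set_option maxHeartbeats 1000000

noncomputable section

namespace Asg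

/-! ### The difference function and the energy argument -/

section Energy

variable (U : E4 → ℝ) (w₀ v₁ v₂ w₁ w₂ : E4)

def D0 (q : ℝ×ℝ) : ℝ := KK U w₀ v₁ v₂ w₁ w₂ q - KK U w₀ v₁ v₂ v₁ v₂ q
def D1 (q : ℝ×ℝ) : ℝ := K1 U w₀ v₁ v₂ w₁ w₂ q - K1 U w₀ v₁ v₂ v₁ v₂ q
def D2 (q : ℝ×ℝ) : ℝ := K2 U w₀ v₁ v₂ w₁ w₂ q - K2 U w₀ v₁ v₂ v₁ v₂ q
def D11 (q : ℝ×ℝ) : ℝ := K11 U w₀ v₁ v₂ w₁ w₂ q - K11 U w₀ v₁ v₂ v₁ v₂ q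
def D12 (q : ℝ×ℝ) : ℝ := K12 U w₀ v₁ v₂ w₁ w₂ q - K12 U w₀ v₁ v₂ v₁ v₂ q
def D22 (q : ℝ×ℝ) : ℝ := K22 U w₀ v₁ v₂ w₁ w₂ q - K22 U w₀ v₁ v₂ v₁ v₂ q

def FF (q : ℝ×ℝ) : ℝ :=
  q.1 * ((D1 U w₀ v₁ v₂ w₁ w₂ q)^2 + (D2 U w₀ v₁ v₂ w₁ w₂ q)^2) / 2

def FFr (q : ℝ×ℝ) : ℝ :=
  ((D1 U w₀ v₁ v₂ w₁ w₂ q)^2 + (D2 U w₀ v₁ v₂ w₁ w₂ q)^2) / 2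
    + q.1 * (D1 U w₀ v₁ v₂ w₁ w₂ q * D11 U w₀ v₁ v₂ w₁ w₂ q
      + D2 U w₀ v₁ v₂ w₁ w₂ q * D12 U w₀ v₁ v₂ w₁ w₂ q)

def FFs (q : ℝ×ℝ) : ℝ :=
  q.1 * (D1 U w₀ v₁ v₂ w₁ w₂ q * D12 U w₀ v₁ v₂ w₁ w₂ q
    + D2 U w₀ v₁ v₂ w₁ w₂ q * D22 U w₀ v₁ v₂ w₁ w₂ q)

variable {U}

lemma contD1 (hU : ContDiff ℝ 2 U) : Continuous (D1 U w₀ v₁ v₂ w₁ w₂) :=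
  (contK1 w₀ v₁ v₂ w₁ w₂ hU).sub (contK1 w₀ v₁ v₂ v₁ v₂ hU)
lemma contD2 (hU : ContDiff ℝ 2 U) : Continuous (D2 U w₀ v₁ v₂ w₁ w₂) :=
  (contK2 w₀ v₁ v₂ w₁ w₂ hU).sub (contK2 w₀ v₁ v₂ v₁ v₂ hU)
lemma contD11 (hU : ContDiff ℝ 2 U) : Continuous (D11 U w₀ v₁ v₂ w₁ w₂) :=
  (contK11 w₀ v₁ v₂ w₁ w₂ hU).sub (contK11 w₀ v₁ v₂ v₁ v₂ hU)
lemma contD12 (hU : ContDiff ℝ 2 U) : Continuous (D12 U w₀ v₁ v₂ w₁ w₂) :=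
  (contK12 w₀ v₁ v₂ w₁ w₂ hU).sub (contK12 w₀ v₁ v₂ v₁ v₂ hU)
lemma contD22 (hU : ContDiff ℝ 2 U) : Continuous (D22 U w₀ v₁ v₂ w₁ w₂) :=
  (contK22 w₀ v₁ v₂ w₁ w₂ hU).sub (contK22 w₀ v₁ v₂ v₁ v₂ hU)

lemma contFF (hU : ContDiff ℝ 2 U) : Continuous (FF U w₀ v₁ v₂ w₁ w₂) :=
  ((continuous_fst.mul (((contD1 w₀ v₁ v₂ w₁ w₂ hU).pow 2).add
    ((contD2 w₀ v₁ v₂ w₁ w₂ hU).pow 2))).div_const 2)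

lemma contFFr (hU : ContDiff ℝ 2 U) : Continuous (FFr U w₀ v₁ v₂ w₁ w₂) :=
  (((((contD1 w₀ v₁ v₂ w₁ w₂ hU).pow 2).add
    ((contD2 w₀ v₁ v₂ w₁ w₂ hU).pow 2)).div_const 2)).add
    (continuous_fst.mul (((contD1 w₀ v₁ v₂ w₁ w₂ hU).mul (contD11 w₀ v₁ v₂ w₁ w₂ hU)).add
      ((contD2 w₀ v₁ v₂ w₁ w₂ hU).mul (contD12 w₀ v₁ v₂ w₁ w₂ hU))))

lemma contFFs (hU : ContDiff ℝ 2 U) : Continuous (FFs U w₀ v₁ v₂ w₁ w₂) :=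
  continuous_fst.mul (((contD1 w₀ v₁ v₂ w₁ w₂ hU).mul (contD12 w₀ v₁ v₂ w₁ w₂ hU)).add
    ((contD2 w₀ v₁ v₂ w₁ w₂ hU).mul (contD22 w₀ v₁ v₂ w₁ w₂ hU)))

lemma hasDerivAt_D0_comp (hU : ContDiff ℝ 2 U) {γ : ℝ → ℝ×ℝ} {γ' : ℝ×ℝ} {σ : ℝ}
    (hγ : HasDerivAt γ γ' σ) :
    HasDerivAt (fun s => D0 U w₀ v₁ v₂ w₁ w₂ (γ s))
      (γ'.1 * D1 U w₀ v₁ v₂ w₁ w₂ (γ σ) + γ'.2 * D2 U w₀ v₁ v₂ w₁ w₂ (γ σ)) σ := by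
  have h := (hasDerivAt_KK_comp w₀ v₁ v₂ w₁ w₂ hU hγ).sub
    (hasDerivAt_KK_comp w₀ v₁ v₂ v₁ v₂ hU hγ)
  refine h.congr_deriv ?_
  simp only [D1, D2]; ring

lemma hasDerivAt_D1_comp (hU : ContDiff ℝ 2 U) {γ : ℝ → ℝ×ℝ} {γ' : ℝ×ℝ} {σ : ℝ}
    (hγ : HasDerivAt γ γ' σ) :
    HasDerivAt (fun s => D1 U w₀ v₁ v₂ w₁ w₂ (γ s))
      (γ'.1 * D11 U w₀ v₁ v₂ w₁ w₂ (γ σ) + γ'.2 * D12 U w₀ v₁ v₂ w₁ w₂ (γ σ)) σ := by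
  have h := (hasDerivAt_K1_comp w₀ v₁ v₂ w₁ w₂ hU hγ).sub
    (hasDerivAt_K1_comp w₀ v₁ v₂ v₁ v₂ hU hγ)
  refine h.congr_deriv ?_
  simp only [D11, D12]; ring

lemma hasDerivAt_D2_comp (hU : ContDiff ℝ 2 U) {γ : ℝ → ℝ×ℝ} {γ' : ℝ×ℝ} {σ : ℝ}
    (hγ : HasDerivAt γ γ' σ) :
    HasDerivAt (fun s => D2 U w₀ v₁ v₂ w₁ w₂ (γ s))
      (γ'.1 * D12 U w₀ v₁ v₂ w₁ w₂ (γ σ) + γ'.2 * D22 U w₀ v₁ v₂ w₁ w₂ (γ σ)) σ := by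
  have h := (hasDerivAt_K2_comp w₀ v₁ v₂ w₁ w₂ hU hγ).sub
    (hasDerivAt_K2_comp w₀ v₁ v₂ v₁ v₂ hU hγ)
  refine h.congr_deriv ?_
  simp only [D12, D22]; ring

lemma D0_axis (ρ : ℝ) : D0 U w₀ v₁ v₂ w₁ w₂ (ρ, (0:ℝ)) = 0 := by
  simp [D0, KK_axis]

lemma D1_axis (ρ : ℝ) : D1 U w₀ v₁ v₂ w₁ w₂ (ρ, (0:ℝ)) = 0 := by
  simp [D1, K1_axis]

lemma D2_axis (hU : ContDiff ℝ 2 U) (ρ : ℝ) : D2 U w₀ v₁ v₂ w₁ w₂ (ρ, (0:ℝ)) = 0 := by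
  simp [D2, K2_axis w₀ v₁ v₂ w₁ w₂ hU, K2_axis w₀ v₁ v₂ v₁ v₂ hU]

lemma FF_axis (hU : ContDiff ℝ 2 U) (ρ : ℝ) : FF U w₀ v₁ v₂ w₁ w₂ (ρ, (0:ℝ)) = 0 := by
  simp [FF, D1_axis, D2_axis w₀ v₁ v₂ w₁ w₂ hU]

lemma FF_nonneg {q : ℝ×ℝ} (hq : 0 ≤ q.1) : 0 ≤ FF U w₀ v₁ v₂ w₁ w₂ q :=
  div_nonneg (mul_nonneg hq (add_nonneg (sq_nonneg _) (sq_nonneg _))) (by norm_num)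

lemma pdeD (hU : ContDiff ℝ 2 U)
    (hBal : ∀ p, Upp U p w₁ w₁ + Upp U p w₂ w₂ = Upp U p v₁ v₁ + Upp U p v₂ v₂)
    {q : ℝ×ℝ} (h1 : q.1 ≠ 0) (h2 : q.2 ≠ 0) :
    D22 U w₀ v₁ v₂ w₁ w₂ q = D11 U w₀ v₁ v₂ w₁ w₂ q
      + q.1⁻¹ * D1 U w₀ v₁ v₂ w₁ w₂ q - q.2⁻¹ * D2 U w₀ v₁ v₂ w₁ w₂ q := by
  have dM1 := darboux1 hU q (w₀ := w₀) (v₁ := v₁) (v₂ := v₂) (w₁ := w₁) (w₂ := w₂)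
  have dM2 := darboux2 hU q (w₀ := w₀) (v₁ := v₁) (v₂ := v₂) (w₁ := w₁) (w₂ := w₂)
  have dN1 := darboux1 hU q (w₀ := w₀) (v₁ := v₁) (v₂ := v₂) (w₁ := v₁) (w₂ := v₂)
  have dN2 := darboux2 hU q (w₀ := w₀) (v₁ := v₁) (v₂ := v₂) (w₁ := v₁) (w₂ := v₂)
  rw [show (∫ z in S2, (Upp U (cpt w₀ v₁ v₂ w₁ w₂ q z) w₁ w₁
      + Upp U (cpt w₀ v₁ v₂ w₁ w₂ q z) w₂ w₂))
    = ∫ z in S2, (Upp U (cpt w₀ v₁ v₂ w₁ w₂ q z) v₁ v₁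
      + Upp U (cpt w₀ v₁ v₂ w₁ w₂ q z) v₂ v₂) from
    integral_congr_ae (.of_forall fun z => hBal _)] at dM2
  have e1 : ∀ a b c : ℝ, q.1 * a + q.1^2 * b = q.1^2 * c → b + q.1⁻¹ * a = c := by
    intro a b c h
    have h' : q.1^2 * (b + q.1⁻¹ * a) = q.1^2 * c := by
      have hi : q.1 * q.1⁻¹ = 1 := mul_inv_cancel₀ h1
      linear_combination h + (q.1 * a) * hi
    exact mul_left_cancel₀ (pow_ne_zero 2 h1) h'
  have e2 : ∀ a b c : ℝ, q.2 * a + q.2^2 * b = q.2^2 * c → b + q.2⁻¹ * a = c := by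
    intro a b c h
    have h' : q.2^2 * (b + q.2⁻¹ * a) = q.2^2 * c := by
      have hi : q.2 * q.2⁻¹ = 1 := mul_inv_cancel₀ h2
      linear_combination h + (q.2 * a) * hi
    exact mul_left_cancel₀ (pow_ne_zero 2 h2) h'
  have HM1 := e1 _ _ _ dM1
  have HM2 := e2 _ _ _ dM2
  have HN1 := e1 _ _ _ dN1
  have HN2 := e2 _ _ _ dN2
  simp only [D22, D11, D1, D2]
  linarith [HM1, HM2, HN1, HN2]

lemma hasDerivAt_FF_comp (hU : ContDiff ℝ 2 U) {γ : ℝ → ℝ×ℝ} {γ' : ℝ×ℝ} {σ : ℝ}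
    (hγ : HasDerivAt γ γ' σ) :
    HasDerivAt (fun s => FF U w₀ v₁ v₂ w₁ w₂ (γ s))
      (γ'.1 * FFr U w₀ v₁ v₂ w₁ w₂ (γ σ) + γ'.2 * FFs U w₀ v₁ v₂ w₁ w₂ (γ σ)) σ := by
  have hγ1 : HasDerivAt (fun s => (γ s).1) γ'.1 σ :=
    (ContinuousLinearMap.fst ℝ ℝ ℝ).hasFDerivAt.comp_hasDerivAt σ hγ
  have h1 := hasDerivAt_D1_comp w₀ v₁ v₂ w₁ w₂ hU hγ
  have h2 := hasDerivAt_D2_comp w₀ v₁ v₂ w₁ w₂ hU hγ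
  have h := (hγ1.mul (((h1.pow 2).add (h2.pow 2)))).div_const 2
  refine h.congr_deriv ?_
  simp only [FFr, FFs, Nat.cast_ofNat, Pi.add_apply, Pi.pow_apply]
  ring

variable (U) in
def EE (R σ : ℝ) : ℝ :=
  ∫ s in (0:ℝ)..1, (R - σ) * FF U w₀ v₁ v₂ w₁ w₂ ((R - σ)*s, σ)

variable (U) in
def EEd (R σ s : ℝ) : ℝ :=
  -FF U w₀ v₁ v₂ w₁ w₂ ((R-σ)*s, σ)
    + (R-σ) * ((-s) * FFr U w₀ v₁ v₂ w₁ w₂ ((R-σ)*s, σ)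
      + FFs U w₀ v₁ v₂ w₁ w₂ ((R-σ)*s, σ))

lemma hasDerivAt_EE_integrand (hU : ContDiff ℝ 2 U) (R s σ : ℝ) :
    HasDerivAt (fun σ => (R - σ) * FF U w₀ v₁ v₂ w₁ w₂ ((R-σ)*s, σ))
      (EEd U w₀ v₁ v₂ w₁ w₂ R σ s) σ := by
  have hR : HasDerivAt (fun σ : ℝ => R - σ) (-1) σ := by
    simpa using (hasDerivAt_id σ).const_sub R
  have hγ : HasDerivAt (fun σ => ((R-σ)*s, σ)) ((-1)*s, (1:ℝ)) σ :=
    (hR.mul_const s).prodMk (hasDerivAt_id σ)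
  have hF := hasDerivAt_FF_comp w₀ v₁ v₂ w₁ w₂ hU hγ
  have h := hR.mul hF
  refine h.congr_deriv ?_
  simp only [EEd]
  ring

lemma contEEd (hU : ContDiff ℝ 2 U) (R : ℝ) :
    Continuous fun p : ℝ×ℝ => EEd U w₀ v₁ v₂ w₁ w₂ R p.1 p.2 := by
  have hmap : Continuous fun p : ℝ×ℝ => ((R - p.1)*p.2, p.1) :=
    ((continuous_const.sub continuous_fst).mul continuous_snd).prodMk continuous_fst
  exact (((contFF w₀ v₁ v₂ w₁ w₂ hU).comp hmap).neg).add
    ((continuous_const.sub continuous_fst).mul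
      (((continuous_snd.neg).mul ((contFFr w₀ v₁ v₂ w₁ w₂ hU).comp hmap)).add
        ((contFFs w₀ v₁ v₂ w₁ w₂ hU).comp hmap)))

lemma hasDerivAt_EE (hU : ContDiff ℝ 2 U) (R σ : ℝ) :
    HasDerivAt (EE U w₀ v₁ v₂ w₁ w₂ R)
      (∫ s in (0:ℝ)..1, EEd U w₀ v₁ v₂ w₁ w₂ R σ s) σ := by
  have hjc := contEEd w₀ v₁ v₂ w₁ w₂ hU R
  obtain ⟨C, hC⟩ := ((isCompact_closedBall σ 1).prod isCompact_Icc).exists_bound_of_continuousOn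
    hjc.continuousOn
  have hFcont : ∀ x : ℝ, Continuous fun s => (R - x) * FF U w₀ v₁ v₂ w₁ w₂ ((R-x)*s, x) :=
    fun x => continuous_const.mul ((contFF w₀ v₁ v₂ w₁ w₂ hU).comp
      ((continuous_const.mul continuous_id).prodMk continuous_const))
  have := (intervalIntegral.hasDerivAt_integral_of_dominated_loc_of_deriv_le
    (F := fun x s => (R - x) * FF U w₀ v₁ v₂ w₁ w₂ ((R-x)*s, x))
    (F' := fun x s => EEd U w₀ v₁ v₂ w₁ w₂ R x s)
    (bound := fun _ => C) (a := (0:ℝ)) (b := 1) (x₀ := σ) (Metric.ball_mem_nhds σ one_pos)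
    (Eventually.of_forall fun x => (hFcont x).aestronglyMeasurable)
    ((hFcont σ).intervalIntegrable _ _)
    ((hjc.comp (continuous_const.prodMk continuous_id)).aestronglyMeasurable)
    (Eventually.of_forall fun t ht x hx => by
      have ht' : t ∈ Icc (0:ℝ) 1 := by
        have : Set.uIoc (0:ℝ) 1 = Set.Ioc 0 1 := Set.uIoc_of_le zero_le_one
        rw [this] at ht
        exact Set.Ioc_subset_Icc_self ht
      exact hC (x, t) ⟨Metric.ball_subset_closedBall hx, ht'⟩)
    (intervalIntegrable_const : IntervalIntegrable (fun _ => C) volume 0 1)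
    (Eventually.of_forall fun t _ x _ =>
      hasDerivAt_EE_integrand w₀ v₁ v₂ w₁ w₂ hU R t x)).2
  exact this

lemma EE_zero0 (hU : ContDiff ℝ 2 U) (R : ℝ) : EE U w₀ v₁ v₂ w₁ w₂ R 0 = 0 := by
  rw [show EE U w₀ v₁ v₂ w₁ w₂ R 0
    = ∫ s in (0:ℝ)..1, (R - 0) * FF U w₀ v₁ v₂ w₁ w₂ ((R - 0)*s, 0) from rfl]
  rw [intervalIntegral.integral_congr (g := fun _ => (0:ℝ))
    (fun s _ => by rw [FF_axis w₀ v₁ v₂ w₁ w₂ hU]; ring)]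
  simp

lemma EE_nonneg (hU : ContDiff ℝ 2 U) {R σ : ℝ} (h0 : 0 ≤ σ) (hσR : σ ≤ R) :
    0 ≤ EE U w₀ v₁ v₂ w₁ w₂ R σ := by
  apply intervalIntegral.integral_nonneg zero_le_one
  intro s hs
  exact mul_nonneg (by linarith)
    (FF_nonneg w₀ v₁ v₂ w₁ w₂ (by simpa using mul_nonneg (by linarith : (0:ℝ) ≤ R - σ) hs.1))

lemma EE_deriv_nonpos (hU : ContDiff ℝ 2 U)
    (hBal : ∀ p, Upp U p w₁ w₁ + Upp U p w₂ w₂ = Upp U p v₁ v₁ + Upp U p v₂ v₂)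
    {R σ : ℝ} (hσ : 0 < σ) (hσR : σ < R) :
    (∫ s in (0:ℝ)..1, EEd U w₀ v₁ v₂ w₁ w₂ R σ s) ≤ 0 := by
  have ht : 0 < R - σ := by linarith
  have hmap : Continuous fun s : ℝ => (((R-σ)*s : ℝ), σ) :=
    (continuous_const.mul continuous_id).prodMk continuous_const
  have hcFF : Continuous fun s : ℝ => FF U w₀ v₁ v₂ w₁ w₂ ((R-σ)*s, σ) :=
    (contFF w₀ v₁ v₂ w₁ w₂ hU).comp hmap
  have hcFFr : Continuous fun s : ℝ => FFr U w₀ v₁ v₂ w₁ w₂ ((R-σ)*s, σ) :=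
    (contFFr w₀ v₁ v₂ w₁ w₂ hU).comp hmap
  have hcFFs : Continuous fun s : ℝ => FFs U w₀ v₁ v₂ w₁ w₂ ((R-σ)*s, σ) :=
    (contFFs w₀ v₁ v₂ w₁ w₂ hU).comp hmap
  have hcD1 : Continuous fun s : ℝ => D1 U w₀ v₁ v₂ w₁ w₂ ((R-σ)*s, σ) :=
    (contD1 w₀ v₁ v₂ w₁ w₂ hU).comp hmap
  have hcD2 : Continuous fun s : ℝ => D2 U w₀ v₁ v₂ w₁ w₂ ((R-σ)*s, σ) :=
    (contD2 w₀ v₁ v₂ w₁ w₂ hU).comp hmap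
  have hcD11 : Continuous fun s : ℝ => D11 U w₀ v₁ v₂ w₁ w₂ ((R-σ)*s, σ) :=
    (contD11 w₀ v₁ v₂ w₁ w₂ hU).comp hmap
  have hcD12 : Continuous fun s : ℝ => D12 U w₀ v₁ v₂ w₁ w₂ ((R-σ)*s, σ) :=
    (contD12 w₀ v₁ v₂ w₁ w₂ hU).comp hmap
  have hγ : ∀ s : ℝ, HasDerivAt (fun s : ℝ => (((R-σ)*s : ℝ), σ)) (((R-σ)*1 : ℝ), (0:ℝ)) s :=
    fun s => ((hasDerivAt_id s).const_mul (R-σ)).prodMk (hasDerivAt_const s σ)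
  -- Part A : FTC for s ↦ s * FF((R-σ)s, σ)
  have hA : (∫ s in (0:ℝ)..1, (FF U w₀ v₁ v₂ w₁ w₂ ((R-σ)*s, σ)
        + s * ((R-σ) * FFr U w₀ v₁ v₂ w₁ w₂ ((R-σ)*s, σ))))
      = FF U w₀ v₁ v₂ w₁ w₂ ((R-σ), σ) := by
    have hftc := intervalIntegral.integral_eq_sub_of_hasDerivAt
      (f := fun s => s * FF U w₀ v₁ v₂ w₁ w₂ ((R-σ)*s, σ))
      (f' := fun s => FF U w₀ v₁ v₂ w₁ w₂ ((R-σ)*s, σ)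
        + s * ((R-σ) * FFr U w₀ v₁ v₂ w₁ w₂ ((R-σ)*s, σ)))
      (a := (0:ℝ)) (b := 1)
      (fun s _ => by
        have h := (hasDerivAt_id s).mul (hasDerivAt_FF_comp w₀ v₁ v₂ w₁ w₂ hU (hγ s))
        refine h.congr_deriv ?_
        simp
        all_goals ring)
      (by
        apply Continuous.intervalIntegrable
        exact hcFF.add (continuous_id.mul (continuous_const.mul hcFFr)))
    rw [hftc]
    norm_num
  -- Part B : FTC + PDE for the FFs term
  have hf2deriv : ∀ s : ℝ, HasDerivAt
      (fun s => s * ((R-σ) * (D1 U w₀ v₁ v₂ w₁ w₂ ((R-σ)*s, σ) * D2 U w₀ v₁ v₂ w₁ w₂ ((R-σ)*s, σ))))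
      ((R-σ) * (D1 U w₀ v₁ v₂ w₁ w₂ ((R-σ)*s, σ) * D2 U w₀ v₁ v₂ w₁ w₂ ((R-σ)*s, σ))
        + s * ((R-σ) * (((R-σ) * D11 U w₀ v₁ v₂ w₁ w₂ ((R-σ)*s, σ)) * D2 U w₀ v₁ v₂ w₁ w₂ ((R-σ)*s, σ)
          + D1 U w₀ v₁ v₂ w₁ w₂ ((R-σ)*s, σ) * ((R-σ) * D12 U w₀ v₁ v₂ w₁ w₂ ((R-σ)*s, σ))))) s := by
    intro s
    have hprod := (hasDerivAt_D1_comp w₀ v₁ v₂ w₁ w₂ hU (hγ s)).mul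
      (hasDerivAt_D2_comp w₀ v₁ v₂ w₁ w₂ hU (hγ s))
    have h := (hasDerivAt_id s).mul (hprod.const_mul (R-σ))
    refine h.congr_deriv ?_
    simp
    all_goals ring
  have hcongr : ∀ᵐ s ∂(volume : Measure ℝ), s ∈ Set.uIoc (0:ℝ) 1 →
      (R-σ) * FFs U w₀ v₁ v₂ w₁ w₂ ((R-σ)*s, σ)
      = ((R-σ) * (D1 U w₀ v₁ v₂ w₁ w₂ ((R-σ)*s, σ) * D2 U w₀ v₁ v₂ w₁ w₂ ((R-σ)*s, σ))
        + s * ((R-σ) * (((R-σ) * D11 U w₀ v₁ v₂ w₁ w₂ ((R-σ)*s, σ)) * D2 U w₀ v₁ v₂ w₁ w₂ ((R-σ)*s, σ)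
          + D1 U w₀ v₁ v₂ w₁ w₂ ((R-σ)*s, σ) * ((R-σ) * D12 U w₀ v₁ v₂ w₁ w₂ ((R-σ)*s, σ)))))
        - σ⁻¹ * ((R-σ)*((R-σ)*s) * (D2 U w₀ v₁ v₂ w₁ w₂ ((R-σ)*s, σ))^2) := by
    refine Eventually.of_forall fun s hs => ?_
    have hs0 : 0 < s := by
      rw [Set.uIoc_of_le zero_le_one] at hs
      exact hs.1
    have hne1 : (((R-σ)*s : ℝ), σ).1 ≠ 0 := ne_of_gt (mul_pos ht hs0)
    have hne2 : (((R-σ)*s : ℝ), σ).2 ≠ 0 := ne_of_gt hσ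
    have hp := pdeD w₀ v₁ v₂ w₁ w₂ hU hBal hne1 hne2
    simp only [FFs]
    rw [hp]
    have hts : ((R-σ)*s : ℝ) ≠ 0 := ne_of_gt (mul_pos ht hs0)
    have hσ0 : σ ≠ 0 := ne_of_gt hσ
    field_simp
    ring
  have hB : (∫ s in (0:ℝ)..1, (R-σ) * FFs U w₀ v₁ v₂ w₁ w₂ ((R-σ)*s, σ))
      = (R-σ) * (D1 U w₀ v₁ v₂ w₁ w₂ ((R-σ), σ) * D2 U w₀ v₁ v₂ w₁ w₂ ((R-σ), σ))
        - σ⁻¹ * ∫ s in (0:ℝ)..1, ((R-σ)*((R-σ)*s) * (D2 U w₀ v₁ v₂ w₁ w₂ ((R-σ)*s, σ))^2) := by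
    rw [intervalIntegral.integral_congr_ae hcongr]
    have hcdf2 : Continuous fun s : ℝ =>
        ((R-σ) * (D1 U w₀ v₁ v₂ w₁ w₂ ((R-σ)*s, σ) * D2 U w₀ v₁ v₂ w₁ w₂ ((R-σ)*s, σ))
        + s * ((R-σ) * (((R-σ) * D11 U w₀ v₁ v₂ w₁ w₂ ((R-σ)*s, σ)) * D2 U w₀ v₁ v₂ w₁ w₂ ((R-σ)*s, σ)
          + D1 U w₀ v₁ v₂ w₁ w₂ ((R-σ)*s, σ) * ((R-σ) * D12 U w₀ v₁ v₂ w₁ w₂ ((R-σ)*s, σ))))) :=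
      (continuous_const.mul (hcD1.mul hcD2)).add
        (continuous_id.mul (continuous_const.mul
          (((continuous_const.mul hcD11).mul hcD2).add (hcD1.mul (continuous_const.mul hcD12)))))
    have hcg : Continuous fun s : ℝ =>
        σ⁻¹ * ((R-σ)*((R-σ)*s) * (D2 U w₀ v₁ v₂ w₁ w₂ ((R-σ)*s, σ))^2) :=
      continuous_const.mul ((continuous_const.mul (continuous_const.mul continuous_id)).mul
        (hcD2.pow 2))
    rw [intervalIntegral.integral_sub (hcdf2.intervalIntegrable _ _)
      (hcg.intervalIntegrable _ _)]
    rw [intervalIntegral.integral_eq_sub_of_hasDerivAt (fun s _ => hf2deriv s)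
      (hcdf2.intervalIntegrable _ _)]
    rw [intervalIntegral.integral_const_mul]
    norm_num
  -- split the integral
  have hi1 : IntervalIntegrable (fun s => -(FF U w₀ v₁ v₂ w₁ w₂ ((R-σ)*s, σ)
      + s * ((R-σ) * FFr U w₀ v₁ v₂ w₁ w₂ ((R-σ)*s, σ)))) volume 0 1 :=
    (hcFF.add (continuous_id.mul (continuous_const.mul hcFFr))).neg.intervalIntegrable _ _
  have hi2 : IntervalIntegrable (fun s => (R-σ) * FFs U w₀ v₁ v₂ w₁ w₂ ((R-σ)*s, σ)) volume 0 1 :=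
    (continuous_const.mul hcFFs).intervalIntegrable _ _
  have hsplit : (∫ s in (0:ℝ)..1, EEd U w₀ v₁ v₂ w₁ w₂ R σ s)
      = (∫ s in (0:ℝ)..1, -(FF U w₀ v₁ v₂ w₁ w₂ ((R-σ)*s, σ)
          + s * ((R-σ) * FFr U w₀ v₁ v₂ w₁ w₂ ((R-σ)*s, σ))))
        + ∫ s in (0:ℝ)..1, (R-σ) * FFs U w₀ v₁ v₂ w₁ w₂ ((R-σ)*s, σ) := by
    rw [← intervalIntegral.integral_add hi1 hi2]
    apply intervalIntegral.integral_congr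
    intro s _
    simp only [EEd]
    ring
  have hJ : 0 ≤ ∫ s in (0:ℝ)..1, ((R-σ)*((R-σ)*s) * (D2 U w₀ v₁ v₂ w₁ w₂ ((R-σ)*s, σ))^2) := by
    apply intervalIntegral.integral_nonneg zero_le_one
    intro s hs
    exact mul_nonneg (mul_nonneg ht.le (mul_nonneg ht.le hs.1)) (sq_nonneg _)
  rw [hsplit, intervalIntegral.integral_neg, hA, hB]
  simp only [FF]
  nlinarith [mul_nonneg ht.le (sq_nonneg (D1 U w₀ v₁ v₂ w₁ w₂ ((R-σ), σ)
      - D2 U w₀ v₁ v₂ w₁ w₂ ((R-σ), σ))),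
    mul_nonneg (inv_nonneg.mpr hσ.le) hJ]

lemma EE_eq_zero (hU : ContDiff ℝ 2 U)
    (hBal : ∀ p, Upp U p w₁ w₁ + Upp U p w₂ w₂ = Upp U p v₁ v₁ + Upp U p v₂ v₂)
    {R σ : ℝ} (h0 : 0 ≤ σ) (hσR : σ ≤ R) : EE U w₀ v₁ v₂ w₁ w₂ R σ = 0 := by
  refine le_antisymm ?_ (EE_nonneg w₀ v₁ v₂ w₁ w₂ hU h0 hσR)
  rcases eq_or_lt_of_le h0 with h|h
  · rw [← h, EE_zero0 w₀ v₁ v₂ w₁ w₂ hU R]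
  · have hcont : Continuous (EE U w₀ v₁ v₂ w₁ w₂ R) := by
      rw [continuous_iff_continuousAt]
      exact fun x => (hasDerivAt_EE w₀ v₁ v₂ w₁ w₂ hU R x).continuousAt
    have hanti : AntitoneOn (EE U w₀ v₁ v₂ w₁ w₂ R) (Icc 0 σ) := by
      apply antitoneOn_of_deriv_nonpos (convex_Icc 0 σ) hcont.continuousOn
      · intro x hx
        exact (hasDerivAt_EE w₀ v₁ v₂ w₁ w₂ hU R x).differentiableAt.differentiableWithinAt
      · intro x hx
        rw [interior_Icc] at hx
        rw [(hasDerivAt_EE w₀ v₁ v₂ w₁ w₂ hU R x).deriv]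
        exact EE_deriv_nonpos w₀ v₁ v₂ w₁ w₂ hU hBal hx.1 (lt_of_lt_of_le hx.2 hσR)
    have hle := hanti (Set.left_mem_Icc.mpr h.le) (Set.right_mem_Icc.mpr h.le) h.le
    rwa [EE_zero0 w₀ v₁ v₂ w₁ w₂ hU R] at hle

theorem key (hU : ContDiff ℝ 2 U)
    (hBal : ∀ p, Upp U p w₁ w₁ + Upp U p w₂ w₂ = Upp U p v₁ v₁ + Upp U p v₂ v₂)
    {r : ℝ} (hr : 0 ≤ r) :
    KK U w₀ v₁ v₂ w₁ w₂ ((0:ℝ), r) = KK U w₀ v₁ v₂ v₁ v₂ ((0:ℝ), r) := by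
  -- Step 1 : F vanishes on the open quadrant
  have hFzero : ∀ σ t : ℝ, 0 < σ → 0 < t → FF U w₀ v₁ v₂ w₁ w₂ (t, σ) = 0 := by
    intro σ t hσ ht
    have hWz : ∀ τ : ℝ, 0 < τ → (∫ ρ in (0:ℝ)..τ, FF U w₀ v₁ v₂ w₁ w₂ (ρ, σ)) = 0 := by
      intro τ hτ
      have hEe : EE U w₀ v₁ v₂ w₁ w₂ (σ+τ) σ = 0 :=
        EE_eq_zero w₀ v₁ v₂ w₁ w₂ hU hBal hσ.le (by linarith)
      have h1 : EE U w₀ v₁ v₂ w₁ w₂ (σ+τ) σ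
          = ∫ s in (0:ℝ)..1, τ * FF U w₀ v₁ v₂ w₁ w₂ (τ*s, σ) := by
        rw [show EE U w₀ v₁ v₂ w₁ w₂ (σ+τ) σ
          = ∫ s in (0:ℝ)..1, (σ+τ-σ) * FF U w₀ v₁ v₂ w₁ w₂ ((σ+τ-σ)*s, σ) from rfl]
        simp
      have h2 : (∫ s in (0:ℝ)..1, FF U w₀ v₁ v₂ w₁ w₂ (τ*s, σ))
          = τ⁻¹ • ∫ ρ in (0:ℝ)..τ, FF U w₀ v₁ v₂ w₁ w₂ (ρ, σ) := by
        have hcv := intervalIntegral.integral_comp_mul_left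
          (a := (0:ℝ)) (b := 1) (c := τ) (f := fun ρ => FF U w₀ v₁ v₂ w₁ w₂ (ρ, σ)) hτ.ne'
        simpa using hcv
      have h3 : τ * (τ⁻¹ * ∫ ρ in (0:ℝ)..τ, FF U w₀ v₁ v₂ w₁ w₂ (ρ, σ)) = 0 := by
        rw [show τ⁻¹ * (∫ ρ in (0:ℝ)..τ, FF U w₀ v₁ v₂ w₁ w₂ (ρ, σ)) = τ⁻¹ • ∫ ρ in (0:ℝ)..τ, FF U w₀ v₁ v₂ w₁ w₂ (ρ, σ) from rfl, ← h2,
          ← intervalIntegral.integral_const_mul, ← h1, hEe]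
      rwa [← mul_assoc, mul_inv_cancel₀ hτ.ne', one_mul] at h3
    have hcont : Continuous fun ρ => FF U w₀ v₁ v₂ w₁ w₂ (ρ, σ) :=
      (contFF w₀ v₁ v₂ w₁ w₂ hU).comp (continuous_id.prodMk continuous_const)
    have hW1 : HasDerivAt (fun τ => ∫ ρ in (0:ℝ)..τ, FF U w₀ v₁ v₂ w₁ w₂ (ρ,σ))
        (FF U w₀ v₁ v₂ w₁ w₂ (t,σ)) t :=
      intervalIntegral.integral_hasDerivAt_right (hcont.intervalIntegrable _ _)
        (hcont.stronglyMeasurableAtFilter _ _) hcont.continuousAt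
    have hW0 : HasDerivAt (fun τ => ∫ ρ in (0:ℝ)..τ, FF U w₀ v₁ v₂ w₁ w₂ (ρ,σ)) 0 t := by
      have heq : (fun τ => ∫ ρ in (0:ℝ)..τ, FF U w₀ v₁ v₂ w₁ w₂ (ρ,σ))
          =ᶠ[nhds t] fun _ => (0:ℝ) :=
        eventually_of_mem (Ioi_mem_nhds ht) fun τ hτ => hWz τ hτ
      exact (hasDerivAt_const t (0:ℝ)).congr_of_eventuallyEq heq
    exact hW1.unique hW0
  -- Step 2 : D2 vanishes on the closed half-line {0} × [0,∞)
  have hD2t : ∀ σ : ℝ, 0 < σ → ∀ t : ℝ, 0 < t → D2 U w₀ v₁ v₂ w₁ w₂ (t, σ) = 0 := by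
    intro σ hσ t ht
    have h := hFzero σ t hσ ht
    simp only [FF] at h
    have hS : (D1 U w₀ v₁ v₂ w₁ w₂ (t,σ))^2 + (D2 U w₀ v₁ v₂ w₁ w₂ (t,σ))^2 = 0 := by
      have h2 : t * ((D1 U w₀ v₁ v₂ w₁ w₂ (t,σ))^2 + (D2 U w₀ v₁ v₂ w₁ w₂ (t,σ))^2) = 0 := by
        linarith
      exact (mul_eq_zero.mp h2).resolve_left ht.ne'
    have hsq : (D2 U w₀ v₁ v₂ w₁ w₂ (t,σ))^2 = 0 := by
      nlinarith [sq_nonneg (D1 U w₀ v₁ v₂ w₁ w₂ (t,σ))]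
    exact sq_eq_zero_iff.mp hsq
  have hD2 : ∀ σ : ℝ, 0 ≤ σ → D2 U w₀ v₁ v₂ w₁ w₂ ((0:ℝ), σ) = 0 := by
    intro σ hσ
    rcases eq_or_lt_of_le hσ with h|h
    · rw [← h]
      exact D2_axis w₀ v₁ v₂ w₁ w₂ hU 0
    · have hcont : Continuous fun t => D2 U w₀ v₁ v₂ w₁ w₂ (t, σ) :=
        (contD2 w₀ v₁ v₂ w₁ w₂ hU).comp (continuous_id.prodMk continuous_const)
      have hseq : Tendsto (fun n : ℕ => D2 U w₀ v₁ v₂ w₁ w₂ (1/(n+1), σ)) atTop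
          (nhds (D2 U w₀ v₁ v₂ w₁ w₂ ((0:ℝ), σ))) :=
        (hcont.tendsto 0).comp tendsto_one_div_add_atTop_nhds_zero_nat
      have hz : (fun n : ℕ => D2 U w₀ v₁ v₂ w₁ w₂ (1/(n+1), σ)) = fun _ => (0:ℝ) :=
        funext fun n => hD2t σ h _ (by positivity)
      rw [hz] at hseq
      exact tendsto_nhds_unique hseq tendsto_const_nhds
  -- Step 3 : FTC along the vertical axis
  have hder : ∀ σ : ℝ, HasDerivAt (fun σ => D0 U w₀ v₁ v₂ w₁ w₂ ((0:ℝ), σ))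
      (D2 U w₀ v₁ v₂ w₁ w₂ ((0:ℝ), σ)) σ := by
    intro σ
    have hγ : HasDerivAt (fun σ : ℝ => ((0:ℝ), σ)) ((0:ℝ), (1:ℝ)) σ :=
      (hasDerivAt_const σ (0:ℝ)).prodMk (hasDerivAt_id σ)
    have h := hasDerivAt_D0_comp w₀ v₁ v₂ w₁ w₂ hU hγ
    refine h.congr_deriv ?_
    simp
  have hFTC := intervalIntegral.integral_eq_sub_of_hasDerivAt
    (f := fun σ => D0 U w₀ v₁ v₂ w₁ w₂ ((0:ℝ), σ))
    (f' := fun σ => D2 U w₀ v₁ v₂ w₁ w₂ ((0:ℝ), σ))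
    (a := (0:ℝ)) (b := r) (fun σ _ => hder σ)
    (Continuous.intervalIntegrable
      ((contD2 w₀ v₁ v₂ w₁ w₂ hU).comp (continuous_const.prodMk continuous_id)) _ _)
  have hInt0 : (∫ σ in (0:ℝ)..r, D2 U w₀ v₁ v₂ w₁ w₂ ((0:ℝ), σ)) = 0 := by
    rw [intervalIntegral.integral_congr (g := fun _ => (0:ℝ)) (fun σ hσ => by
      rw [Set.uIcc_of_le hr] at hσ
      exact hD2 σ hσ.1)]
    simp
  rw [hInt0] at hFTC
  have hend : D0 U w₀ v₁ v₂ w₁ w₂ ((0:ℝ), r) = D0 U w₀ v₁ v₂ w₁ w₂ ((0:ℝ), 0) := by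
    linarith [hFTC]
  rw [D0_axis w₀ v₁ v₂ w₁ w₂ 0] at hend
  have : KK U w₀ v₁ v₂ w₁ w₂ ((0:ℝ), r) - KK U w₀ v₁ v₂ v₁ v₂ ((0:ℝ), r) = 0 := hend
  linarith [this]

end Energy

end Asg


open MeasureTheory Set Filter intervalIntegral
open scoped Topology

set_option maxHeartbeats 1000000

noncomputable section

namespace Asg

lemma KK_eval {U : E4 → ℝ} (hU : ContDiff ℝ 2 U) (w₀ v₁ v₂ b₁ b₂ : E4) (r : ℝ) :
    KK U w₀ v₁ v₂ b₁ b₂ ((0:ℝ), r)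
      = (2*Real.pi) * ∫ θ in (0:ℝ)..(2*Real.pi), U (w₀ + r • circ b₁ b₂ θ) := by
  have hc : Continuous fun z : ℝ×ℝ => U (w₀ + r • circ b₁ b₂ z.2) :=
    hU.continuous.comp (continuous_const.add
      (((contCirc b₁ b₂).comp continuous_snd).const_smul r))
  have h1 : KK U w₀ v₁ v₂ b₁ b₂ ((0:ℝ), r) = ∫ z in S2, U (w₀ + r • circ b₁ b₂ z.2) := by
    refine integral_congr_ae (.of_forall fun z => ?_)
    show U (cpt w₀ v₁ v₂ b₁ b₂ ((0:ℝ),r) z) = U (w₀ + r • circ b₁ b₂ z.2)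
    rw [cpt_eq]
    simp
  rw [h1, setIntegral_S2 hc]
  show (∫ _x in Icc (0:ℝ) (2*Real.pi), ∫ y in Icc (0:ℝ) (2*Real.pi), U (w₀ + r • circ b₁ b₂ y)) = _
  rw [MeasureTheory.setIntegral_const, Real.volume_real_Icc_of_le twoPi_nonneg, Icc_intervalIntegral,
    smul_eq_mul, sub_zero]

lemma hlap (u : ℝ → ℝ → ℝ → ℝ → ℝ)
    (hu : ContDiff ℝ 2 (fun p : ℝ × ℝ × ℝ × ℝ => u p.1 p.2.1 p.2.2.1 p.2.2.2))
    (huhe : ∀ x₁ x₂ x₃ x₄ : ℝ,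
      deriv (fun t => deriv (fun s => u s x₂ x₃ x₄) t) x₁
      + deriv (fun t => deriv (fun s => u x₁ s x₃ x₄) t) x₂
      - deriv (fun t => deriv (fun s => u x₁ x₂ s x₄) t) x₃
      - deriv (fun t => deriv (fun s => u x₁ x₂ x₃ s) t) x₄ = 0) :
    ∀ p : E4,
      Upp (fun p : E4 => u p.1 p.2.1 p.2.2.1 p.2.2.2) p ((1:ℝ),(0:ℝ),(0:ℝ),(0:ℝ)) ((1:ℝ),(0:ℝ),(0:ℝ),(0:ℝ))
      + Upp (fun p : E4 => u p.1 p.2.1 p.2.2.1 p.2.2.2) p ((0:ℝ),(1:ℝ),(0:ℝ),(0:ℝ)) ((0:ℝ),(1:ℝ),(0:ℝ),(0:ℝ))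
      = Upp (fun p : E4 => u p.1 p.2.1 p.2.2.1 p.2.2.2) p ((0:ℝ),(0:ℝ),(1:ℝ),(0:ℝ)) ((0:ℝ),(0:ℝ),(1:ℝ),(0:ℝ))
      + Upp (fun p : E4 => u p.1 p.2.1 p.2.2.1 p.2.2.2) p ((0:ℝ),(0:ℝ),(0:ℝ),(1:ℝ)) ((0:ℝ),(0:ℝ),(0:ℝ),(1:ℝ)) := by
  intro p
  obtain ⟨x₁, x₂, x₃, x₄⟩ := p
  have huhe' := huhe x₁ x₂ x₃ x₄
  have hι₁ : ∀ t : ℝ, HasDerivAt (fun s : ℝ => ((s, x₂, x₃, x₄) : E4))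
      (((1:ℝ),(0:ℝ),(0:ℝ),(0:ℝ)) : E4) t := fun t =>
    (hasDerivAt_id t).prodMk (hasDerivAt_const t _)
  have hι₂ : ∀ t : ℝ, HasDerivAt (fun s : ℝ => ((x₁, s, x₃, x₄) : E4))
      (((0:ℝ),(1:ℝ),(0:ℝ),(0:ℝ)) : E4) t := fun t =>
    (hasDerivAt_const t _).prodMk ((hasDerivAt_id t).prodMk (hasDerivAt_const t _))
  have hι₃ : ∀ t : ℝ, HasDerivAt (fun s : ℝ => ((x₁, x₂, s, x₄) : E4))
      (((0:ℝ),(0:ℝ),(1:ℝ),(0:ℝ)) : E4) t := fun t =>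
    (hasDerivAt_const t _).prodMk ((hasDerivAt_const t _).prodMk
      ((hasDerivAt_id t).prodMk (hasDerivAt_const t _)))
  have hι₄ : ∀ t : ℝ, HasDerivAt (fun s : ℝ => ((x₁, x₂, x₃, s) : E4))
      (((0:ℝ),(0:ℝ),(0:ℝ),(1:ℝ)) : E4) t := fun t =>
    (hasDerivAt_const t _).prodMk ((hasDerivAt_const t _).prodMk
      ((hasDerivAt_const t _).prodMk (hasDerivAt_id t)))
  have hd1 : deriv (fun t => deriv (fun s => u s x₂ x₃ x₄) t) x₁
      = Upp (fun p : E4 => u p.1 p.2.1 p.2.2.1 p.2.2.2) (x₁,x₂,x₃,x₄)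
        ((1:ℝ),(0:ℝ),(0:ℝ),(0:ℝ)) ((1:ℝ),(0:ℝ),(0:ℝ),(0:ℝ)) := by
    have hinner : (fun t : ℝ => deriv (fun s => u s x₂ x₃ x₄) t)
        = fun t => Up (fun p : E4 => u p.1 p.2.1 p.2.2.1 p.2.2.2) (t, x₂, x₃, x₄)
          (((1:ℝ),(0:ℝ),(0:ℝ),(0:ℝ)) : E4) := by
      funext t
      exact ((diffU hu _).comp_hasDerivAt t (hι₁ t)).deriv
    rw [hinner]
    have h := ((diffUp hu _).comp_hasDerivAt x₁ (hι₁ x₁)).clm_apply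
      (hasDerivAt_const x₁ (((1:ℝ),(0:ℝ),(0:ℝ),(0:ℝ)) : E4))
    simp only [Function.comp_apply] at h
    rw [h.deriv]
    simp
  have hd2 : deriv (fun t => deriv (fun s => u x₁ s x₃ x₄) t) x₂
      = Upp (fun p : E4 => u p.1 p.2.1 p.2.2.1 p.2.2.2) (x₁,x₂,x₃,x₄)
        ((0:ℝ),(1:ℝ),(0:ℝ),(0:ℝ)) ((0:ℝ),(1:ℝ),(0:ℝ),(0:ℝ)) := by
    have hinner : (fun t : ℝ => deriv (fun s => u x₁ s x₃ x₄) t)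
        = fun t => Up (fun p : E4 => u p.1 p.2.1 p.2.2.1 p.2.2.2) (x₁, t, x₃, x₄)
          (((0:ℝ),(1:ℝ),(0:ℝ),(0:ℝ)) : E4) := by
      funext t
      exact ((diffU hu _).comp_hasDerivAt t (hι₂ t)).deriv
    rw [hinner]
    have h := ((diffUp hu _).comp_hasDerivAt x₂ (hι₂ x₂)).clm_apply
      (hasDerivAt_const x₂ (((0:ℝ),(1:ℝ),(0:ℝ),(0:ℝ)) : E4))
    simp only [Function.comp_apply] at h
    rw [h.deriv]
    simp
  have hd3 : deriv (fun t => deriv (fun s => u x₁ x₂ s x₄) t) x₃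
      = Upp (fun p : E4 => u p.1 p.2.1 p.2.2.1 p.2.2.2) (x₁,x₂,x₃,x₄)
        ((0:ℝ),(0:ℝ),(1:ℝ),(0:ℝ)) ((0:ℝ),(0:ℝ),(1:ℝ),(0:ℝ)) := by
    have hinner : (fun t : ℝ => deriv (fun s => u x₁ x₂ s x₄) t)
        = fun t => Up (fun p : E4 => u p.1 p.2.1 p.2.2.1 p.2.2.2) (x₁, x₂, t, x₄)
          (((0:ℝ),(0:ℝ),(1:ℝ),(0:ℝ)) : E4) := by
      funext t
      exact ((diffU hu _).comp_hasDerivAt t (hι₃ t)).deriv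
    rw [hinner]
    have h := ((diffUp hu _).comp_hasDerivAt x₃ (hι₃ x₃)).clm_apply
      (hasDerivAt_const x₃ (((0:ℝ),(0:ℝ),(1:ℝ),(0:ℝ)) : E4))
    simp only [Function.comp_apply] at h
    rw [h.deriv]
    simp
  have hd4 : deriv (fun t => deriv (fun s => u x₁ x₂ x₃ s) t) x₄
      = Upp (fun p : E4 => u p.1 p.2.1 p.2.2.1 p.2.2.2) (x₁,x₂,x₃,x₄)
        ((0:ℝ),(0:ℝ),(0:ℝ),(1:ℝ)) ((0:ℝ),(0:ℝ),(0:ℝ),(1:ℝ)) := by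
    have hinner : (fun t : ℝ => deriv (fun s => u x₁ x₂ x₃ s) t)
        = fun t => Up (fun p : E4 => u p.1 p.2.1 p.2.2.1 p.2.2.2) (x₁, x₂, x₃, t)
          (((0:ℝ),(0:ℝ),(0:ℝ),(1:ℝ)) : E4) := by
      funext t
      exact ((diffU hu _).comp_hasDerivAt t (hι₄ t)).deriv
    rw [hinner]
    have h := ((diffUp hu _).comp_hasDerivAt x₄ (hι₄ x₄)).clm_apply
      (hasDerivAt_const x₄ (((0:ℝ),(0:ℝ),(0:ℝ),(1:ℝ)) : E4))
    simp only [Function.comp_apply] at h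
    rw [h.deriv]
    simp
  rw [hd1, hd2, hd3, hd4] at huhe'
  linarith

end Asg


/-- **Asgeirsson's mean value theorem.** If `u : ℝ⁴ → ℝ` is a `C²` solution of the
ultrahyperbolic equation `u_{X₁X₁} + u_{X₂X₂} - u_{X₃X₃} - u_{X₄X₄} = 0`, then the mean
values of `u` over circles of equal radius in the two orthogonal definite 2-planes agree. -/
theorem asgeirsson_mean_value
    (u : ℝ → ℝ → ℝ → ℝ → ℝ)
    (hu : ContDiff ℝ 2 (fun p : ℝ × ℝ × ℝ × ℝ => u p.1 p.2.1 p.2.2.1 p.2.2.2))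
    (huhe : ∀ x₁ x₂ x₃ x₄ : ℝ,
      deriv (fun t => deriv (fun s => u s x₂ x₃ x₄) t) x₁
      + deriv (fun t => deriv (fun s => u x₁ s x₃ x₄) t) x₂
      - deriv (fun t => deriv (fun s => u x₁ x₂ s x₄) t) x₃
      - deriv (fun t => deriv (fun s => u x₁ x₂ x₃ s) t) x₄ = 0)
    (a b c d r : ℝ) (hr : 0 < r) :
    ∫ θ in (0:ℝ)..(2 * Real.pi),
        u (a + r * Real.cos θ) (b + r * Real.sin θ) c d
    = ∫ θ in (0:ℝ)..(2 * Real.pi),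
        u a b (c + r * Real.cos θ) (d + r * Real.sin θ) := by
  have hlap' := Asg.hlap u hu huhe
  have hkey := Asg.key ((a,b,c,d) : Asg.E4)
    (((1:ℝ),(0:ℝ),(0:ℝ),(0:ℝ)) : Asg.E4) (((0:ℝ),(1:ℝ),(0:ℝ),(0:ℝ)) : Asg.E4)
    (((0:ℝ),(0:ℝ),(1:ℝ),(0:ℝ)) : Asg.E4) (((0:ℝ),(0:ℝ),(0:ℝ),(1:ℝ)) : Asg.E4)
    hu (fun p => (hlap' p).symm) hr.le
  rw [Asg.KK_eval hu, Asg.KK_eval hu] at hkey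
  have hM : ∀ θ : ℝ, (((a,b,c,d) : Asg.E4)
      + r • Asg.circ (((0:ℝ),(0:ℝ),(1:ℝ),(0:ℝ)) : Asg.E4) (((0:ℝ),(0:ℝ),(0:ℝ),(1:ℝ)) : Asg.E4) θ)
      = ((a, b, c + r * Real.cos θ, d + r * Real.sin θ) : Asg.E4) := by
    intro θ
    simp [Asg.circ, Prod.ext_iff]
  have hN : ∀ θ : ℝ, (((a,b,c,d) : Asg.E4)
      + r • Asg.circ (((1:ℝ),(0:ℝ),(0:ℝ),(0:ℝ)) : Asg.E4) (((0:ℝ),(1:ℝ),(0:ℝ),(0:ℝ)) : Asg.E4) θ)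
      = ((a + r * Real.cos θ, b + r * Real.sin θ, c, d) : Asg.E4) := by
    intro θ
    simp [Asg.circ, Prod.ext_iff]
  have h2 : (∫ θ in (0:ℝ)..(2*Real.pi),
      u (((a,b,c,d) : Asg.E4) + r • Asg.circ (((0:ℝ),(0:ℝ),(1:ℝ),(0:ℝ)) : Asg.E4)
          (((0:ℝ),(0:ℝ),(0:ℝ),(1:ℝ)) : Asg.E4) θ).1
        (((a,b,c,d) : Asg.E4) + r • Asg.circ (((0:ℝ),(0:ℝ),(1:ℝ),(0:ℝ)) : Asg.E4)
          (((0:ℝ),(0:ℝ),(0:ℝ),(1:ℝ)) : Asg.E4) θ).2.1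
        (((a,b,c,d) : Asg.E4) + r • Asg.circ (((0:ℝ),(0:ℝ),(1:ℝ),(0:ℝ)) : Asg.E4)
          (((0:ℝ),(0:ℝ),(0:ℝ),(1:ℝ)) : Asg.E4) θ).2.2.1
        (((a,b,c,d) : Asg.E4) + r • Asg.circ (((0:ℝ),(0:ℝ),(1:ℝ),(0:ℝ)) : Asg.E4)
          (((0:ℝ),(0:ℝ),(0:ℝ),(1:ℝ)) : Asg.E4) θ).2.2.2)
      = ∫ θ in (0:ℝ)..(2*Real.pi), u a b (c + r * Real.cos θ) (d + r * Real.sin θ) := by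
    apply intervalIntegral.integral_congr
    intro θ _
    simp only [hM θ]
  have h3 : (∫ θ in (0:ℝ)..(2*Real.pi),
      u (((a,b,c,d) : Asg.E4) + r • Asg.circ (((1:ℝ),(0:ℝ),(0:ℝ),(0:ℝ)) : Asg.E4)
          (((0:ℝ),(1:ℝ),(0:ℝ),(0:ℝ)) : Asg.E4) θ).1
        (((a,b,c,d) : Asg.E4) + r • Asg.circ (((1:ℝ),(0:ℝ),(0:ℝ),(0:ℝ)) : Asg.E4)
          (((0:ℝ),(1:ℝ),(0:ℝ),(0:ℝ)) : Asg.E4) θ).2.1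
        (((a,b,c,d) : Asg.E4) + r • Asg.circ (((1:ℝ),(0:ℝ),(0:ℝ),(0:ℝ)) : Asg.E4)
          (((0:ℝ),(1:ℝ),(0:ℝ),(0:ℝ)) : Asg.E4) θ).2.2.1
        (((a,b,c,d) : Asg.E4) + r • Asg.circ (((1:ℝ),(0:ℝ),(0:ℝ),(0:ℝ)) : Asg.E4)
          (((0:ℝ),(1:ℝ),(0:ℝ),(0:ℝ)) : Asg.E4) θ).2.2.2)
      = ∫ θ in (0:ℝ)..(2*Real.pi), u (a + r * Real.cos θ) (b + r * Real.sin θ) c d := by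
    apply intervalIntegral.integral_congr
    intro θ _
    simp only [hN θ]
  rw [h2, h3] at hkey
  have h2π : (2*Real.pi) ≠ 0 := by positivity
  exact (mul_left_cancel₀ h2π hkey).symm
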